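/- arXiv:1808.05609 — 5 statements merged into one kernel-verified Lean document; each statement's English description precedes it below -/
import Mathlib

section
/- If S ⊆ ℤ is a set of rigidity for a nontrivial weak mixing measure preserving system (X,μ,T) and m ∈ ℤ \ {0}, then the translate S + m is not a set of strong recurrence for weak mixing systems. -/
/-- A measure preserving system: a probability space `(X, μ)` together with an
invertible measure preserving transformation `T : X → X`. -/
structure MPSystem where
  X : Type
  [mX : MeasurableSpace X]
  μ : MeasureTheory.Measure X
  prob : MeasureTheory.IsProbabilityMeasure μ
  T : X ≃ᵐ X
  mp : MeasureTheory.MeasurePreserving T μ μ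

attribute [instance] MPSystem.mX

open MeasureTheory Filter

namespace MPSystem

/-- The `n`-th iterate `Tⁿ` of the transformation, for `n : ℤ`. -/
def iter (𝒮 : MPSystem) (n : ℤ) : 𝒮.X → 𝒮.X :=
  fun x => ((𝒮.T.toEquiv : Equiv.Perm 𝒮.X) ^ n) x

/-- The system is ergodic: every measurable `D` with `μ(D △ T⁻¹D) = 0` has measure `0` or `1`. -/
def IsErgodic (𝒮 : MPSystem) : Prop :=
  ∀ D : Set 𝒮.X, MeasurableSet D → 𝒮.μ (symmDiff D (𝒮.T ⁻¹' D)) = 0 →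
    𝒮.μ D = 0 ∨ 𝒮.μ D = 1

/-- The product system `(X × X, μ × μ, T × T)`. -/
noncomputable def prod (𝒮 : MPSystem) : MPSystem where
  X := 𝒮.X × 𝒮.X
  μ := 𝒮.μ.prod 𝒮.μ
  prob := by have := 𝒮.prob; infer_instance
  T := 𝒮.T.prodCongr 𝒮.T
  mp := by have := 𝒮.prob; exact 𝒮.mp.prod 𝒮.mp

/-- The system is weak mixing: the product system `(X×X, μ×μ, T×T)` is ergodic. -/
def WeakMixing (𝒮 : MPSystem) : Prop := 𝒮.prod.IsErgodic

/-- The system is nontrivial: some measurable `D` has `μ(D △ T⁻¹D) > 0`. -/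
def Nontrivial (𝒮 : MPSystem) : Prop :=
  ∃ D : Set 𝒮.X, MeasurableSet D ∧ 0 < 𝒮.μ (symmDiff D (𝒮.T ⁻¹' D))

end MPSystem

/-- `S ⊆ ℤ` is a set of recurrence: for every measure preserving system and every
measurable `D` with `μ(D) > 0`, there is `n ∈ S` with `μ(D ∩ TⁿD) > 0`. -/
def IsRecurrenceSet (S : Set ℤ) : Prop :=
  ∀ (𝒮 : MPSystem) (D : Set 𝒮.X), MeasurableSet D → 0 < 𝒮.μ D →
    ∃ n ∈ S, 0 < 𝒮.μ (D ∩ 𝒮.iter n '' D)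

/-- `S ⊆ ℤ` is measure expanding: every translate `S + m` is a set of recurrence. -/
def MeasureExpanding (S : Set ℤ) : Prop :=
  ∀ m : ℤ, IsRecurrenceSet ((fun s => s + m) '' S)

/-- `S` is a set of `δ`-recurrence: for every measure preserving system and every
measurable `D` with `μ(D) > δ`, there is `n ∈ S` with `μ(D ∩ TⁿD) > 0`. -/
def IsDeltaRecurrenceSet (δ : ℝ) (S : Set ℤ) : Prop :=
  ∀ (𝒮 : MPSystem) (D : Set 𝒮.X), MeasurableSet D → ENNReal.ofReal δ < 𝒮.μ D →
    ∃ n ∈ S, 0 < 𝒮.μ (D ∩ 𝒮.iter n '' D)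

/-- `S` (an infinite set) is a set of rigidity for the system `𝒮`:
for every measurable `D` and every `ε > 0`, `{n ∈ S : μ(D △ TⁿD) > ε}` is finite. -/
def IsRigiditySetFor (S : Set ℤ) (𝒮 : MPSystem) : Prop :=
  S.Infinite ∧ ∀ D : Set 𝒮.X, MeasurableSet D → ∀ ε : ℝ, 0 < ε →
    {n ∈ S | ENNReal.ofReal ε < 𝒮.μ (symmDiff D (𝒮.iter n '' D))}.Finite

/-- `S` is a set of strong recurrence. -/
def IsStrongRecurrenceSet (S : Set ℤ) : Prop :=
  ∀ (𝒮 : MPSystem) (D : Set 𝒮.X), MeasurableSet D → 0 < 𝒮.μ D →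
    ∃ c : ℝ, 0 < c ∧ {n ∈ S | ENNReal.ofReal c < 𝒮.μ (D ∩ 𝒮.iter n '' D)}.Infinite

/-- `S` is a set of strong recurrence for weak mixing systems. -/
def IsStrongRecurrenceSetForWeakMixing (S : Set ℤ) : Prop :=
  ∀ (𝒮 : MPSystem), 𝒮.WeakMixing → ∀ (D : Set 𝒮.X), MeasurableSet D → 0 < 𝒮.μ D →
    ∃ c : ℝ, 0 < c ∧ {n ∈ S | ENNReal.ofReal c < 𝒮.μ (D ∩ 𝒮.iter n '' D)}.Infinite

/-- The circle group `𝕋 = ℝ/ℤ`. -/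
abbrev 𝕋 : Type := UnitAddCircle

/-- The character `e : 𝕋 → S¹ ⊆ ℂ`, `e(x) = exp(2πi x̃)` where `x̃` is a real
representative of `x`. -/
noncomputable def e (x : 𝕋) : ℂ := (AddCircle.toCircle x : ℂ)

/-- A tuple `α ∈ 𝕋^d` is independent if the only integer solution of
`n₁α₁ + ⋯ + n_dα_d = 0` is `n₁ = ⋯ = n_d = 0`. -/
def IndepTuple {d : ℕ} (α : Fin d → 𝕋) : Prop :=
  ∀ n : Fin d → ℤ, (∑ j, n j • α j) = 0 → ∀ j, n j = 0

/-- The Bohr set `Bohr(α, η) = {n ∈ ℤ : max_j ‖nαⱼ‖ < η}`. -/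
def BohrSet {d : ℕ} (α : Fin d → 𝕋) (η : ℝ) : Set ℤ :=
  {n : ℤ | ∀ j, ‖n • α j‖ < η}

/-- The Bohr–Hamming neighborhood `BH(α; ε, η) = {n ∈ ℤ : #{j : ‖nαⱼ‖ < ε} ≥ (1-η)d}`. -/
def BHNbhd {d : ℕ} (α : Fin d → 𝕋) (ε η : ℝ) : Set ℤ :=
  {n : ℤ | (1 - η) * d ≤ ({j : Fin d | ‖n • α j‖ < ε}.ncard : ℝ)}

/-- The upper Banach density of `A ⊆ ℤ`:
`d*(A) = lim_k sup_n |A ∩ {n+1,…,n+k}|/k` (realized as a `limsup`). -/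
noncomputable def upperBanachDensity (A : Set ℤ) : ℝ :=
  Filter.limsup
    (fun k : ℕ => ⨆ n : ℤ, ((A ∩ Set.Icc (n + 1) (n + k)).ncard : ℝ) / k) Filter.atTop

section Aux

namespace MPSystem

variable (𝒮 : MPSystem)

lemma measurable_zpow (n : ℤ) : Measurable ⇑((𝒮.T.toEquiv : Equiv.Perm 𝒮.X) ^ n) := by
  induction n using Int.induction_on with
  | zero => simpa using measurable_id
  | succ k ih =>
      have h : ((𝒮.T.toEquiv : Equiv.Perm 𝒮.X) ^ ((k:ℤ)+1)) = (𝒮.T.toEquiv ^ (k:ℤ)) * 𝒮.T.toEquiv := by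
        rw [zpow_add, zpow_one]
      rw [h]
      exact ih.comp 𝒮.T.measurable
  | pred k ih =>
      have h : ((𝒮.T.toEquiv : Equiv.Perm 𝒮.X) ^ (-(k:ℤ)-1)) = (𝒮.T.toEquiv ^ (-(k:ℤ))) * (𝒮.T.toEquiv)⁻¹ := by
        rw [← zpow_neg_one, ← zpow_add]; ring_nf
      rw [h]
      have h2 : ⇑((𝒮.T.toEquiv ^ (-(k:ℤ)) : Equiv.Perm 𝒮.X) * (𝒮.T.toEquiv)⁻¹) =
          ⇑(𝒮.T.toEquiv ^ (-(k:ℤ)) : Equiv.Perm 𝒮.X) ∘ ⇑𝒮.T.symm := rfl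
      rw [h2]
      exact ih.comp 𝒮.T.symm.measurable

lemma mp_iter (n : ℤ) : MeasurePreserving (𝒮.iter n) 𝒮.μ 𝒮.μ := by
  induction n using Int.induction_on with
  | zero =>
      rw [show 𝒮.iter 0 = id from funext fun x => by
        show ((𝒮.T.toEquiv : Equiv.Perm 𝒮.X) ^ (0:ℤ)) x = x; simp]
      exact MeasurePreserving.id 𝒮.μ
  | succ k ih =>
      have h : 𝒮.iter ((k:ℤ)+1) = 𝒮.iter (k:ℤ) ∘ ⇑𝒮.T := by
        funext x
        show ((𝒮.T.toEquiv : Equiv.Perm 𝒮.X) ^ ((k:ℤ)+1)) x = _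
        rw [zpow_add, zpow_one]; rfl
      rw [h]
      exact ih.comp 𝒮.mp
  | pred k ih =>
      have h : 𝒮.iter (-(k:ℤ)-1) = 𝒮.iter (-(k:ℤ)) ∘ ⇑𝒮.T.symm := by
        funext x
        show ((𝒮.T.toEquiv : Equiv.Perm 𝒮.X) ^ (-(k:ℤ)-1)) x
            = ((𝒮.T.toEquiv : Equiv.Perm 𝒮.X) ^ (-(k:ℤ))) (𝒮.T.symm x)
        have h1 : ((𝒮.T.toEquiv : Equiv.Perm 𝒮.X) ^ (-(k:ℤ)-1)) = (𝒮.T.toEquiv ^ (-(k:ℤ))) * (𝒮.T.toEquiv)⁻¹ := by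
          rw [← zpow_neg_one, ← zpow_add]; ring_nf
        rw [h1]; rfl
      rw [h]
      exact ih.comp (MeasurePreserving.symm 𝒮.T 𝒮.mp)

/-- The `n`-th iterate as a measurable equiv. -/
noncomputable def iterE (n : ℤ) : 𝒮.X ≃ᵐ 𝒮.X where
  toEquiv := (𝒮.T.toEquiv : Equiv.Perm 𝒮.X) ^ n
  measurable_toFun := 𝒮.measurable_zpow n
  measurable_invFun := by
    have h : ((𝒮.T.toEquiv : Equiv.Perm 𝒮.X) ^ n).symm = ((𝒮.T.toEquiv : Equiv.Perm 𝒮.X) ^ (-n)) := by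
      rw [zpow_neg]; rfl
    show Measurable ⇑((𝒮.T.toEquiv : Equiv.Perm 𝒮.X) ^ n).symm
    rw [h]; exact 𝒮.measurable_zpow (-n)

lemma iterE_coe (n : ℤ) : ⇑(𝒮.iterE n) = 𝒮.iter n := rfl

lemma iter_add (a b : ℤ) (x : 𝒮.X) : 𝒮.iter (a+b) x = 𝒮.iter a (𝒮.iter b x) := by
  show ((𝒮.T.toEquiv : Equiv.Perm 𝒮.X) ^ (a+b)) x = _
  rw [zpow_add]; rfl

lemma iter_zero : 𝒮.iter 0 = id := by
  funext x; show ((𝒮.T.toEquiv : Equiv.Perm 𝒮.X) ^ (0:ℤ)) x = x; simp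

lemma iter_injective (n : ℤ) : Function.Injective (𝒮.iter n) :=
  (𝒮.iterE n).injective

lemma iter_image_add (a b : ℤ) (A : Set 𝒮.X) :
    𝒮.iter (a+b) '' A = 𝒮.iter a '' (𝒮.iter b '' A) := by
  have h : 𝒮.iter (a+b) = 𝒮.iter a ∘ 𝒮.iter b := funext (𝒮.iter_add a b)
  rw [h, Set.image_comp]

lemma iter_image_measurableSet {A : Set 𝒮.X} (hA : MeasurableSet A) (n : ℤ) :
    MeasurableSet (𝒮.iter n '' A) := by
  rw [← 𝒮.iterE_coe, MeasurableEquiv.image_eq_preimage_symm]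
  exact (𝒮.iterE n).symm.measurable hA

lemma iter_image_measure {A : Set 𝒮.X} (hA : MeasurableSet A) (n : ℤ) :
    𝒮.μ (𝒮.iter n '' A) = 𝒮.μ A := by
  rw [← 𝒮.iterE_coe, MeasurableEquiv.image_eq_preimage_symm]
  exact (MeasurePreserving.symm _ (𝒮.mp_iter n)).measure_preimage hA.nullMeasurableSet

lemma T_preimage_iter_image (D : Set 𝒮.X) (n : ℤ) :
    ⇑𝒮.T ⁻¹' (𝒮.iter n '' D) = 𝒮.iter (n-1) '' D := by
  ext x
  simp only [Set.mem_preimage, Set.mem_image]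
  constructor
  · rintro ⟨d, hd, hdx⟩
    refine ⟨d, hd, ?_⟩
    have h1 : 𝒮.iter (-1) (𝒮.iter n d) = 𝒮.iter (-1) (𝒮.T x) := by rw [hdx]
    rw [← 𝒮.iter_add] at h1
    have h2 : 𝒮.iter (-1) (𝒮.T x) = x := by
      show ((𝒮.T.toEquiv : Equiv.Perm 𝒮.X) ^ (-1:ℤ)) (𝒮.T x) = x
      rw [zpow_neg_one]
      exact 𝒮.T.toEquiv.symm_apply_apply x
    rw [h2] at h1
    rw [show n - 1 = -1 + n by ring]
    exact h1
  · rintro ⟨d, hd, hdx⟩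
    refine ⟨d, hd, ?_⟩
    have h1 : 𝒮.iter 1 (𝒮.iter (n-1) d) = 𝒮.iter n d := by
      rw [← 𝒮.iter_add]; norm_num
    have h2 : 𝒮.iter 1 (𝒮.iter (n-1) d) = 𝒮.T (𝒮.iter (n-1) d) := by
      show ((𝒮.T.toEquiv : Equiv.Perm 𝒮.X) ^ (1:ℤ)) _ = _
      rw [zpow_one]; rfl
    rw [hdx] at h1 h2
    rw [← h1, h2]

end MPSystem

end Aux
namespace MPSystem

variable (𝒮 : MPSystem)

lemma mem_agree {P : Set 𝒮.X} {p : 𝒮.X × 𝒮.X} :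
    p ∈ (P ×ˢ P ∪ Pᶜ ×ˢ Pᶜ) ↔ (p.1 ∈ P ↔ p.2 ∈ P) := by
  simp only [Set.mem_union, Set.mem_prod, Set.mem_compl_iff]
  tauto

lemma measure_pos_of_nontrivial (hnt : 𝒮.Nontrivial) :
    ∃ D : Set 𝒮.X, MeasurableSet D ∧ 0 < 𝒮.μ (symmDiff D (⇑𝒮.T ⁻¹' D)) ∧
      𝒮.μ D ≠ 0 ∧ 𝒮.μ Dᶜ ≠ 0 := by
  obtain ⟨D, hD, hpos⟩ := hnt
  have hprob := 𝒮.prob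
  have hpre : 𝒮.μ (⇑𝒮.T ⁻¹' D) = 𝒮.μ D := 𝒮.mp.measure_preimage hD.nullMeasurableSet
  refine ⟨D, hD, hpos, ?_, ?_⟩
  · intro h0
    have : 𝒮.μ (symmDiff D (⇑𝒮.T ⁻¹' D)) ≤ 𝒮.μ D + 𝒮.μ (⇑𝒮.T ⁻¹' D) := by
      refine le_trans (measure_mono ?_) (measure_union_le _ _)
      rw [Set.symmDiff_def]
      exact Set.union_subset_union Set.diff_subset Set.diff_subset
    rw [h0, hpre, h0] at this
    simp at this
    exact absurd this (by simpa [this] using hpos.ne')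
  · intro h0
    have hpre' : 𝒮.μ (⇑𝒮.T ⁻¹' Dᶜ) = 𝒮.μ Dᶜ := 𝒮.mp.measure_preimage hD.compl.nullMeasurableSet
    have hsub : symmDiff D (⇑𝒮.T ⁻¹' D) ⊆ (⇑𝒮.T ⁻¹' Dᶜ) ∪ Dᶜ := by
      rw [Set.symmDiff_def]
      apply Set.union_subset
      · intro x hx; left; exact hx.2
      · intro x hx; right; exact hx.2
    have : 𝒮.μ (symmDiff D (⇑𝒮.T ⁻¹' D)) ≤ 𝒮.μ (⇑𝒮.T ⁻¹' Dᶜ) + 𝒮.μ Dᶜ :=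
      le_trans (measure_mono hsub) (measure_union_le _ _)
    rw [hpre', h0] at this
    simp at this
    exact absurd this (by simpa using hpos.ne')

/-- If the system is nontrivial and weak mixing then no nonzero power of `T` acts
trivially on the measure algebra. -/
lemma exists_symmDiff_iter_pos (hnt : 𝒮.Nontrivial) (hwm : 𝒮.WeakMixing)
    (m : ℤ) (hm : m ≠ 0) :
    ∃ A : Set 𝒮.X, MeasurableSet A ∧ 0 < 𝒮.μ (symmDiff A (𝒮.iter m '' A)) := by
  classical
  have hprob := 𝒮.prob
  by_contra hcon
  push_neg at hcon
  have hAll : ∀ A : Set 𝒮.X, MeasurableSet A → 𝒮.μ (symmDiff A (𝒮.iter m '' A)) = 0 :=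
    fun A hA => le_antisymm (hcon A hA) (zero_le)
  -- also for -m
  have hAllNeg : ∀ A : Set 𝒮.X, MeasurableSet A → 𝒮.μ (symmDiff A (𝒮.iter (-m) '' A)) = 0 := by
    intro A hA
    have h1 := hAll (𝒮.iter (-m) '' A) (𝒮.iter_image_measurableSet hA (-m))
    have h2 : 𝒮.iter m '' (𝒮.iter (-m) '' A) = A := by
      rw [← 𝒮.iter_image_add]
      simp [𝒮.iter_zero]
    rw [h2] at h1
    rw [symmDiff_comm]
    exact h1
  set M : ℕ := m.natAbs with hMdef
  have hM : 0 < M := Int.natAbs_pos.mpr hm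
  have hzero : ∀ A : Set 𝒮.X, MeasurableSet A → 𝒮.μ (symmDiff A (𝒮.iter (M:ℤ) '' A)) = 0 := by
    intro A hA
    rcases Int.natAbs_eq m with h | h
    · rw [← h]; exact hAll A hA
    · rw [show ((M:ℤ) = -m) by omega]; exact hAllNeg A hA
  obtain ⟨D, hD, hpos, hD0, hD1⟩ := 𝒮.measure_pos_of_nontrivial hnt
  -- the sets E n = TⁿD and the agreement set W
  set E : ℤ → Set 𝒮.X := fun n => 𝒮.iter n '' D with hEdef
  have hEmeas : ∀ n : ℤ, MeasurableSet (E n) := fun n => 𝒮.iter_image_measurableSet hD n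
  set agr : Set 𝒮.X → Set (𝒮.X × 𝒮.X) := fun P => P ×ˢ P ∪ Pᶜ ×ˢ Pᶜ with hagrdef
  have hagrmeas : ∀ {P : Set 𝒮.X}, MeasurableSet P → MeasurableSet (agr P) :=
    fun hP => (hP.prod hP).union (hP.compl.prod hP.compl)
  set W : Set (𝒮.X × 𝒮.X) := ⋂ k : Fin M, agr (E (k : ℤ)) with hWdef
  have hWmeas : MeasurableSet W := MeasurableSet.iInter fun k => hagrmeas (hEmeas _)
  -- the preimage of W under T × T
  have hTp : ∀ p : 𝒮.X × 𝒮.X, (𝒮.T.prodCongr 𝒮.T) p = (𝒮.T p.1, 𝒮.T p.2) := fun p => rfl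
  have hWpre : ⇑(𝒮.T.prodCongr 𝒮.T) ⁻¹' W = ⋂ k : Fin M, agr (E ((k : ℤ) - 1)) := by
    ext p
    simp only [Set.mem_preimage, hWdef, Set.mem_iInter, hTp]
    apply forall_congr'
    intro k
    have h1 : (𝒮.T p.1 ∈ E (k:ℤ) ↔ p.1 ∈ E ((k:ℤ)-1)) := by
      rw [hEdef]; simp only []
      rw [← 𝒮.T_preimage_iter_image D (k:ℤ)]; rfl
    have h2 : (𝒮.T p.2 ∈ E (k:ℤ) ↔ p.2 ∈ E ((k:ℤ)-1)) := by
      rw [hEdef]; simp only []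
      rw [← 𝒮.T_preimage_iter_image D (k:ℤ)]; rfl
    rw [show ((𝒮.T p.1, 𝒮.T p.2) ∈ agr (E (k:ℤ))) ↔ (𝒮.T p.1 ∈ E (k:ℤ) ↔ 𝒮.T p.2 ∈ E (k:ℤ)) from 𝒮.mem_agree,
       show (p ∈ agr (E ((k:ℤ)-1))) ↔ (p.1 ∈ E ((k:ℤ)-1) ↔ p.2 ∈ E ((k:ℤ)-1)) from 𝒮.mem_agree,
       h1, h2]
  -- N is null
  set N : Set 𝒮.X := symmDiff (E (-1)) (E ((M:ℤ)-1)) with hNdef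
  have hNmeas : MeasurableSet N := (hEmeas _).symmDiff (hEmeas _)
  have hN : 𝒮.μ N = 0 := by
    have h0 : 𝒮.μ (symmDiff D (𝒮.iter (M:ℤ) '' D)) = 0 := hzero D hD
    have h1 : 𝒮.μ (𝒮.iter (-1) '' (symmDiff D (𝒮.iter (M:ℤ) '' D))) = 0 := by
      rw [𝒮.iter_image_measure (hD.symmDiff (𝒮.iter_image_measurableSet hD _)) (-1)]
      exact h0
    rw [Set.image_symmDiff (𝒮.iter_injective (-1))] at h1
    rw [← 𝒮.iter_image_add] at h1
    rw [hNdef, hEdef]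
    simp only []
    rw [show (-1 + (M:ℤ)) = (M:ℤ) - 1 by ring] at h1
    exact h1
  -- W' : the preimage written explicitly
  set W' : Set (𝒮.X × 𝒮.X) := ⋂ k : Fin M, agr (E ((k : ℤ) - 1)) with hW'def
  have hsub : symmDiff W W' ⊆ N ×ˢ (Set.univ : Set 𝒮.X) ∪ (Set.univ : Set 𝒮.X) ×ˢ N := by
    intro p hp
    by_contra hcontra
    simp only [Set.mem_union, Set.mem_prod, Set.mem_univ, and_true, true_and, not_or] at hcontra
    obtain ⟨hp1, hp2⟩ := hcontra
    have h1 : p.1 ∈ E (-1) ↔ p.1 ∈ E ((M:ℤ)-1) := by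
      rw [hNdef] at hp1
      simp only [Set.mem_symmDiff, not_or, not_and, not_not] at hp1
      tauto
    have h2 : p.2 ∈ E (-1) ↔ p.2 ∈ E ((M:ℤ)-1) := by
      rw [hNdef] at hp2
      simp only [Set.mem_symmDiff, not_or, not_and, not_not] at hp2
      tauto
    rw [Set.mem_symmDiff] at hp
    rcases hp with ⟨hpW, hpW'⟩ | ⟨hpW', hpW⟩
    · apply hpW'
      rw [hW'def, Set.mem_iInter]
      intro k
      rw [show (p ∈ agr (E ((k:ℤ)-1))) ↔ (p.1 ∈ E ((k:ℤ)-1) ↔ p.2 ∈ E ((k:ℤ)-1)) from 𝒮.mem_agree]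
      by_cases hk : (k : ℕ) = 0
      · have hkz : (k : ℤ) - 1 = -1 := by
          have : ((k : ℕ) : ℤ) = 0 := by exact_mod_cast hk
          omega
        rw [hkz]
        have hW1 := Set.mem_iInter.mp hpW ⟨M-1, by omega⟩
        rw [show (p ∈ agr (E ((((⟨M-1, by omega⟩ : Fin M)) : ℤ)))) ↔ _ from 𝒮.mem_agree] at hW1
        have hcast : (((⟨M-1, by omega⟩ : Fin M)) : ℤ) = (M:ℤ) - 1 := by
          simp only [Fin.val_mk]; omega
        rw [hcast] at hW1
        rw [h1, h2]
        exact hW1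
      · have hk1 : (k : ℕ) - 1 < M := by omega
        have hW1 := Set.mem_iInter.mp hpW ⟨(k:ℕ)-1, hk1⟩
        rw [show (p ∈ agr (E ((((⟨(k:ℕ)-1, hk1⟩ : Fin M)) : ℤ)))) ↔ _ from 𝒮.mem_agree] at hW1
        have hcast : (((⟨(k:ℕ)-1, hk1⟩ : Fin M)) : ℤ) = (k:ℤ) - 1 := by
          simp only [Fin.val_mk]; omega
        rw [hcast] at hW1
        exact hW1
    · apply hpW
      rw [hWdef, Set.mem_iInter]
      intro k
      rw [show (p ∈ agr (E (k:ℤ))) ↔ (p.1 ∈ E (k:ℤ) ↔ p.2 ∈ E (k:ℤ)) from 𝒮.mem_agree]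
      by_cases hk : (k : ℕ) = M - 1
      · have hkz : (k : ℤ) = (M:ℤ) - 1 := by omega
        rw [hkz]
        have hW1 := Set.mem_iInter.mp hpW' ⟨0, hM⟩
        rw [show (p ∈ agr (E ((((⟨0, hM⟩ : Fin M)) : ℤ) - 1))) ↔ _ from 𝒮.mem_agree] at hW1
        have hcast : (((⟨0, hM⟩ : Fin M)) : ℤ) - 1 = -1 := by
          simp only [Fin.val_mk]; omega
        rw [hcast] at hW1
        rw [← h1, ← h2]
        exact hW1
      · have hk1 : (k : ℕ) + 1 < M := by omega
        have hW1 := Set.mem_iInter.mp hpW' ⟨(k:ℕ)+1, hk1⟩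
        rw [show (p ∈ agr (E ((((⟨(k:ℕ)+1, hk1⟩ : Fin M)) : ℤ) - 1))) ↔ _ from 𝒮.mem_agree] at hW1
        have hcast : (((⟨(k:ℕ)+1, hk1⟩ : Fin M)) : ℤ) - 1 = (k:ℤ) := by
          simp only [Fin.val_mk]; omega
        rw [hcast] at hW1
        exact hW1
  have hInvNull : (𝒮.μ.prod 𝒮.μ) (symmDiff W (⇑(𝒮.T.prodCongr 𝒮.T) ⁻¹' W)) = 0 := by
    rw [hWpre]
    refine le_antisymm ?_ (zero_le)
    refine le_trans (measure_mono hsub) ?_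
    refine le_trans (measure_union_le _ _) ?_
    rw [Measure.prod_prod, Measure.prod_prod, hN]
    simp
  have herg : (𝒮.μ.prod 𝒮.μ) W = 0 ∨ (𝒮.μ.prod 𝒮.μ) W = 1 := hwm W hWmeas hInvNull
  -- positivity of W
  set XK : Finset (Fin M) → Set 𝒮.X := fun K => {x | ∀ k : Fin M, x ∈ E (k:ℤ) ↔ k ∈ K} with hXKdef
  have hXKmeas : ∀ K, MeasurableSet (XK K) := by
    intro K
    have : XK K = ⋂ k : Fin M, {x | x ∈ E (k:ℤ) ↔ k ∈ K} := by
      ext x; simp [hXKdef]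
    rw [this]
    refine MeasurableSet.iInter fun k => ?_
    by_cases hk : k ∈ K
    · have : {x | x ∈ E (k:ℤ) ↔ k ∈ K} = E (k:ℤ) := by ext x; simp [hk]
      rw [this]; exact hEmeas _
    · have : {x | x ∈ E (k:ℤ) ↔ k ∈ K} = (E (k:ℤ))ᶜ := by ext x; simp [hk]
      rw [this]; exact (hEmeas _).compl
  have hcover : (Set.univ : Set 𝒮.X) ⊆ ⋃ K : Finset (Fin M), XK K := by
    intro x _
    rw [Set.mem_iUnion]
    refine ⟨Finset.univ.filter (fun k => x ∈ E (k:ℤ)), ?_⟩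
    intro k
    simp [Finset.mem_filter]
  obtain ⟨K, hK⟩ : ∃ K : Finset (Fin M), 𝒮.μ (XK K) ≠ 0 := by
    by_contra hc
    push_neg at hc
    have h1 : 𝒮.μ (Set.univ : Set 𝒮.X) ≤ ∑' K : Finset (Fin M), 𝒮.μ (XK K) :=
      le_trans (measure_mono hcover) (measure_iUnion_le _)
    simp only [hc, tsum_zero] at h1
    rw [measure_univ] at h1
    simp at h1
  have hKW : XK K ×ˢ XK K ⊆ W := by
    rintro ⟨x, y⟩ ⟨hx, hy⟩
    rw [hWdef, Set.mem_iInter]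
    intro k
    rw [show ((x,y) ∈ agr (E (k:ℤ))) ↔ _ from 𝒮.mem_agree]
    simp only [hXKdef, Set.mem_setOf_eq] at hx hy
    rw [hx k, hy k]
  have hWpos : (𝒮.μ.prod 𝒮.μ) W ≠ 0 := by
    intro h0
    have : (𝒮.μ.prod 𝒮.μ) (XK K ×ˢ XK K) = 0 :=
      le_antisymm (h0 ▸ measure_mono hKW) (zero_le)
    rw [Measure.prod_prod] at this
    exact hK (by simpa [pos_iff_ne_zero, mul_self_eq_zero] using this)
  have hW1 : (𝒮.μ.prod 𝒮.μ) W = 1 := herg.resolve_left hWpos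
  -- final contradiction : D ×ˢ Dᶜ ⊆ Wᶜ
  have hprod2 : IsProbabilityMeasure (𝒮.μ.prod 𝒮.μ) := by infer_instance
  have hWc : (𝒮.μ.prod 𝒮.μ) Wᶜ = 0 := by
    rw [measure_compl hWmeas (measure_ne_top _ _), hW1, measure_univ]
    simp
  have hE0 : E ((((⟨0, hM⟩ : Fin M)) : ℤ)) = D := by
    have : (((⟨0, hM⟩ : Fin M)) : ℤ) = 0 := by simp
    rw [this, hEdef]
    simp only []
    rw [𝒮.iter_zero, Set.image_id]
  have hDDc : D ×ˢ Dᶜ ⊆ Wᶜ := by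
    rintro ⟨x, y⟩ ⟨hx, hy⟩ hW
    have := Set.mem_iInter.mp hW ⟨0, hM⟩
    rw [show ((x,y) ∈ agr (E ((((⟨0, hM⟩ : Fin M)) : ℤ)))) ↔ _ from 𝒮.mem_agree, hE0] at this
    exact hy (this.mp hx)
  have : (𝒮.μ.prod 𝒮.μ) (D ×ˢ Dᶜ) = 0 :=
    le_antisymm (hWc ▸ measure_mono hDDc) (zero_le)
  rw [Measure.prod_prod] at this
  rcases mul_eq_zero.mp this with h | h
  · exact hD0 h
  · exact hD1 h

end MPSystem
/-- **Lemma.** If `S` is a set of rigidity for a nontrivial weak mixing measure preserving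
system and `m ≠ 0`, then `S + m` is not a set of strong recurrence for weak mixing systems. -/
theorem rigiditySet_translate_not_strongRecurrenceForWeakMixing
    (S : Set ℤ) (𝒮 : MPSystem) (hnt : 𝒮.Nontrivial) (hwm : 𝒮.WeakMixing)
    (hrig : IsRigiditySetFor S 𝒮) (m : ℤ) (hm : m ≠ 0) :
    ¬ IsStrongRecurrenceSetForWeakMixing ((fun s => s + m) '' S) := by
  intro hSR
  have hprob := 𝒮.prob
  obtain ⟨A, hA, hApos⟩ := 𝒮.exists_symmDiff_iter_pos hnt hwm m hm
  set B : Set 𝒮.X := 𝒮.iter m '' A with hBdef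
  have hB : MeasurableSet B := 𝒮.iter_image_measurableSet hA m
  set D : Set 𝒮.X := A \ B with hDdef
  have hDmeas : MeasurableSet D := hA.diff hB
  have hμB : 𝒮.μ B = 𝒮.μ A := 𝒮.iter_image_measure hA m
  have hDpos : 0 < 𝒮.μ D := by
    rw [pos_iff_ne_zero]
    intro h0
    -- then μ(B \ A) = 0 too, hence the symmetric difference is null
    have h1 : 𝒮.μ (A \ B) + 𝒮.μ (A ∩ B) = 𝒮.μ A := measure_diff_add_inter A hB
    have h2 : 𝒮.μ (B \ A) + 𝒮.μ (B ∩ A) = 𝒮.μ B := measure_diff_add_inter B hA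
    rw [hDdef] at h0
    rw [h0, zero_add] at h1
    rw [Set.inter_comm, h1, hμB, ← h1] at h2
    have h3 : 𝒮.μ (B \ A) = 0 := by
      have hfin : 𝒮.μ (A ∩ B) ≠ ⊤ := measure_ne_top _ _
      exact WithTop.add_right_cancel hfin (h2.trans (zero_add (𝒮.μ (A ∩ B))).symm)
    have h4 : 𝒮.μ (symmDiff A B) ≤ 𝒮.μ (A \ B) + 𝒮.μ (B \ A) := by
      rw [Set.symmDiff_def]
      exact measure_union_le _ _
    rw [h0, h3] at h4
    simp only [add_zero, le_zero_iff] at h4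
    exact hApos.ne' h4
  have hdisj : D ∩ 𝒮.iter m '' D = ∅ := by
    apply Set.eq_empty_of_forall_notMem
    rintro x ⟨⟨hxA, hxB⟩, hx2⟩
    apply hxB
    rw [hBdef]
    obtain ⟨d, hd, rfl⟩ := hx2
    exact ⟨d, hd.1, rfl⟩
  obtain ⟨c, hc, hinf⟩ := hSR 𝒮 hwm D hDmeas hDpos
  set E : Set 𝒮.X := 𝒮.iter m '' D with hEdef
  have hEmeas : MeasurableSet E := 𝒮.iter_image_measurableSet hDmeas m
  have hfin : {s ∈ S | ENNReal.ofReal c < 𝒮.μ (symmDiff E (𝒮.iter s '' E))}.Finite :=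
    hrig.2 E hEmeas c hc
  have hsub : {n ∈ (fun s => s + m) '' S | ENNReal.ofReal c < 𝒮.μ (D ∩ 𝒮.iter n '' D)} ⊆
      (fun s => s + m) '' {s ∈ S | ENNReal.ofReal c < 𝒮.μ (symmDiff E (𝒮.iter s '' E))} := by
    rintro n ⟨⟨s, hsS, rfl⟩, hlt⟩
    refine ⟨s, ⟨hsS, ?_⟩, rfl⟩
    by_contra hnot
    push_neg at hnot
    have himg : 𝒮.iter (s + m) '' D = 𝒮.iter s '' E := by
      rw [hEdef, ← 𝒮.iter_image_add]
    have hsubset : D ∩ 𝒮.iter (s + m) '' D ⊆ (D ∩ E) ∪ symmDiff E (𝒮.iter s '' E) := by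
      rintro x ⟨hxD, hx2⟩
      rw [himg] at hx2
      by_cases hxE : x ∈ E
      · exact Or.inl ⟨hxD, hxE⟩
      · exact Or.inr (Set.mem_symmDiff.mpr (Or.inr ⟨hx2, hxE⟩))
    have hDE : 𝒮.μ (D ∩ E) = 0 := by
      rw [hEdef, hdisj]; simp
    have : 𝒮.μ (D ∩ 𝒮.iter (s + m) '' D) ≤ ENNReal.ofReal c := by
      refine le_trans (measure_mono hsubset) ?_
      refine le_trans (measure_union_le _ _) ?_
      rw [hDE, zero_add]
      exact hnot
    exact absurd hlt (not_lt.mpr this)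
  exact hinf ((hfin.image _).subset hsub)
end

section
/- A set S ⊆ ℤ is a set of recurrence if and only if for every δ > 0 there is a finite set contained in S which is a set of δ-recurrence. -/
open MeasureTheory Filter

section ForrestAux

open Set TopologicalSpace

lemma MPSystem.iter_zero_s5 (𝒮 : MPSystem) (x : 𝒮.X) : 𝒮.iter 0 x = x := by
  simp [MPSystem.iter]

lemma MPSystem.iter_succ (𝒮 : MPSystem) (n : ℤ) (x : 𝒮.X) :
    𝒮.iter (n + 1) x = 𝒮.iter n (𝒮.T x) := by
  simp only [MPSystem.iter, zpow_add_one, Equiv.Perm.mul_apply]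
  rfl

lemma MPSystem.iter_pred (𝒮 : MPSystem) (n : ℤ) (x : 𝒮.X) :
    𝒮.iter (n - 1) x = 𝒮.iter n (𝒮.T.symm x) := by
  simp [MPSystem.iter, zpow_sub_one, Equiv.Perm.mul_apply]

lemma MPSystem.measurePreserving_iter (𝒮 : MPSystem) (n : ℤ) :
    MeasurePreserving (𝒮.iter n) 𝒮.μ 𝒮.μ := by
  induction n using Int.induction_on with
  | zero =>
      have h : 𝒮.iter 0 = id := funext fun x => 𝒮.iter_zero_s5 x
      rw [h]; exact MeasurePreserving.id _
  | succ k ih =>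
      have h : 𝒮.iter (k + 1) = 𝒮.iter k ∘ 𝒮.T := funext fun x => 𝒮.iter_succ k x
      rw [h]; exact ih.comp 𝒮.mp
  | pred k ih =>
      have h : 𝒮.iter (-k - 1) = 𝒮.iter (-k) ∘ 𝒮.T.symm := funext fun x => 𝒮.iter_pred (-k) x
      rw [h]; exact ih.comp (𝒮.mp.symm 𝒮.T)

lemma MPSystem.image_iter (𝒮 : MPSystem) (n : ℤ) (D : Set 𝒮.X) :
    𝒮.iter n '' D = 𝒮.iter (-n) ⁻¹' D := by
  have h1 : 𝒮.iter n '' D = ((𝒮.T.toEquiv : Equiv.Perm 𝒮.X) ^ n) '' D := rfl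
  rw [h1, Equiv.image_eq_preimage_symm]
  have h2 : ((𝒮.T.toEquiv : Equiv.Perm 𝒮.X) ^ n).symm
      = ((𝒮.T.toEquiv : Equiv.Perm 𝒮.X) ^ (-n)) := by
    rw [zpow_neg]; rfl
  rw [h2]; rfl

end ForrestAux


section ForrestShift

open Set TopologicalSpace

/-- The sequence space on which we realize weak* limits. -/
abbrev ForrestOmega : Type := ℤ → Bool

/-- The left shift on `ℤ → Bool`, as a measurable equivalence. -/
def forrestShift : ForrestOmega ≃ᵐ ForrestOmega where
  toEquiv :=
    { toFun := fun ω n => ω (n + 1)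
      invFun := fun ω n => ω (n - 1)
      left_inv := fun ω => funext fun n => by simp
      right_inv := fun ω => funext fun n => by simp }
  measurable_toFun := measurable_pi_lambda _ fun n => measurable_pi_apply (n + 1)
  measurable_invFun := measurable_pi_lambda _ fun n => measurable_pi_apply (n - 1)

lemma continuous_forrestShift : Continuous (forrestShift : ForrestOmega → ForrestOmega) :=
  continuous_pi fun n => continuous_apply (n + 1)

lemma exists_clopen_sep {K1 K2 : Set ForrestOmega} (h1 : IsCompact K1) (h2 : IsClosed K2)
    (hd : Disjoint K1 K2) : ∃ V : Set ForrestOmega, IsClopen V ∧ K1 ⊆ V ∧ Disjoint V K2 := by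
  have hxU : ∀ x : ForrestOmega, x ∈ K1 → ∃ V : Set ForrestOmega, IsClopen V ∧ x ∈ V ∧ V ⊆ K2ᶜ :=
    fun x hx => compact_exists_isClopen_in_isOpen h2.isOpen_compl (disjoint_left.mp hd hx)
  choose! V hV1 hV2 hV3 using hxU
  obtain ⟨t, ht⟩ := h1.elim_finite_subcover (fun x : K1 => V x.1)
    (fun x => (hV1 x.1 x.2).isOpen) (fun x hx => mem_iUnion.mpr ⟨⟨x, hx⟩, hV2 x hx⟩)
  refine ⟨⋃ x ∈ t, V x.1, ?_, ht, ?_⟩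
  · exact (t.finite_toSet.isClopen_biUnion fun x _ => hV1 x.1 x.2)
  · rw [disjoint_left]
    intro a ha haK2
    obtain ⟨x, _, hxa⟩ := mem_iUnion₂.mp ha
    exact hV3 x.1 x.2 hxa haK2

end ForrestShift

open TopologicalSpace Set
open scoped ENNReal NNReal Topology

/-- **Lemma (Forrest).** `S ⊆ ℤ` is a set of recurrence if and only if for every `δ > 0`
there is a finite set of `δ`-recurrence contained in `S`. -/
theorem isRecurrenceSet_iff_forall_delta_exists_finite (S : Set ℤ) :
    IsRecurrenceSet S ↔
      ∀ δ : ℝ, 0 < δ → ∃ F : Set ℤ, F.Finite ∧ F ⊆ S ∧ IsDeltaRecurrenceSet δ F := by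
  classical
  constructor
  · -- hard direction
    intro hS δ hδ
    by_contra hcon
    push_neg at hcon
    -- hcon : ∀ F, F.Finite → F ⊆ S → ¬ IsDeltaRecurrenceSet δ F
    have hfin : ∀ k : ℕ, ({n ∈ S | n.natAbs ≤ k}).Finite := fun k =>
      (Set.finite_Icc (-(k : ℤ)) k).subset fun n hn => by
        obtain ⟨-, h2⟩ := hn
        simp only [Set.mem_Icc]; omega
    have hex : ∀ k : ℕ, ∃ 𝒯 : MPSystem, ∃ D : Set 𝒯.X, MeasurableSet D ∧
        ENNReal.ofReal δ < 𝒯.μ D ∧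
        ∀ n ∈ S, n.natAbs ≤ k → 𝒯.μ (D ∩ 𝒯.iter n '' D) = 0 := by
      intro k
      have h1 := hcon {n ∈ S | n.natAbs ≤ k} (hfin k) (Set.sep_subset _ _)
      unfold IsDeltaRecurrenceSet at h1
      push_neg at h1
      obtain ⟨𝒯, D, hD, hμ, h0⟩ := h1
      exact ⟨𝒯, D, hD, hμ, fun n hn hk =>
        le_antisymm (h0 n ⟨hn, hk⟩) zero_le⟩
    choose 𝒯 D hD hμD h0 using hex
    -- the coding maps into the shift space
    set φ : ∀ k : ℕ, (𝒯 k).X → ForrestOmega :=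
      fun k x n => if (𝒯 k).iter n x ∈ D k then true else false with hφdef
    have hφm : ∀ k, Measurable (φ k) := fun k =>
      measurable_pi_lambda _ fun n =>
        Measurable.ite (((𝒯 k).measurePreserving_iter n).measurable (hD k))
          measurable_const measurable_const
    set ν : ℕ → Measure ForrestOmega := fun k => Measure.map (φ k) (𝒯 k).μ with hνdef
    have hνset : ∀ k (s : Set ForrestOmega), MeasurableSet s →
        ν k s = (𝒯 k).μ (φ k ⁻¹' s) := fun k s hs =>
      Measure.map_apply (hφm k) hs
    -- the cylinder sets
    set A : Set ForrestOmega := {ω | ω 0 = true} with hAdef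
    have hA_clopen : IsClopen A := by
      have : A = (fun ω : ForrestOmega => ω 0) ⁻¹' {true} := rfl
      rw [this]
      exact (isClopen_discrete {true}).preimage (continuous_apply 0)
    set E : ℤ → Set ForrestOmega := fun n => {ω | ω 0 = true ∧ ω (-n) = true} with hEdef
    have hE_clopen : ∀ n, IsClopen (E n) := by
      intro n
      have : E n = (fun ω : ForrestOmega => ω 0) ⁻¹' {true} ∩
          (fun ω : ForrestOmega => ω (-n)) ⁻¹' {true} := rfl
      rw [this]
      exact ((isClopen_discrete {true}).preimage (continuous_apply 0)).inter
        ((isClopen_discrete {true}).preimage (continuous_apply (-n)))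
    have hφA : ∀ k, φ k ⁻¹' A = D k := by
      intro k
      ext x
      have h0' : (𝒯 k).iter 0 x = x := (𝒯 k).iter_zero_s5 x
      by_cases hx : x ∈ D k <;>
        simp [hAdef, hφdef, Set.mem_preimage, Set.mem_setOf_eq, h0', hx]
    have hφE : ∀ k n, φ k ⁻¹' E n = D k ∩ ((𝒯 k).iter n '' D k) := by
      intro k n
      rw [(𝒯 k).image_iter]
      ext x
      have h0' : (𝒯 k).iter 0 x = x := (𝒯 k).iter_zero_s5 x
      by_cases hx : x ∈ D k <;> by_cases hy : (𝒯 k).iter (-n) x ∈ D k <;>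
        simp [hEdef, hφdef, Set.mem_preimage, Set.mem_setOf_eq, h0', hx, hy]
    have hνA : ∀ k, ν k A = (𝒯 k).μ (D k) := fun k => by
      rw [hνset k A hA_clopen.isOpen.measurableSet, hφA]
    have hνE : ∀ (n : ℤ), n ∈ S → ∀ k : ℕ, n.natAbs ≤ k → ν k (E n) = 0 := by
      intro n hn k hk
      rw [hνset k (E n) (hE_clopen n).isOpen.measurableSet, hφE]
      exact h0 k n hn hk
    have hνuniv : ∀ k, ν k Set.univ = 1 := by
      intro k
      rw [hνset k _ MeasurableSet.univ]
      simp only [Set.preimage_univ]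
      exact (𝒯 k).prob.measure_univ
    have hνinv : ∀ k (s : Set ForrestOmega), MeasurableSet s →
        ν k (forrestShift ⁻¹' s) = ν k s := by
      intro k s hs
      rw [hνset k _ (forrestShift.measurable hs), hνset k s hs]
      have hcomm : φ k ⁻¹' (forrestShift ⁻¹' s) = (𝒯 k).T ⁻¹' (φ k ⁻¹' s) := by
        have : forrestShift ∘ φ k = φ k ∘ (𝒯 k).T := by
          funext x
          funext n
          show φ k x (n + 1) = φ k ((𝒯 k).T x) n
          simp only [hφdef]
          rw [(𝒯 k).iter_succ n x]
        calc φ k ⁻¹' (forrestShift ⁻¹' s) = (forrestShift ∘ φ k) ⁻¹' s := rfl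
          _ = (φ k ∘ (𝒯 k).T) ⁻¹' s := by rw [this]
          _ = (𝒯 k).T ⁻¹' (φ k ⁻¹' s) := rfl
      rw [hcomm]
      exact (𝒯 k).mp.measure_preimage ((hφm k) hs).nullMeasurableSet
    -- the ultrafilter limit
    set 𝒰 : Ultrafilter ℕ := Ultrafilter.of atTop with h𝒰def
    have h𝒰le : (𝒰 : Filter ℕ) ≤ atTop := Ultrafilter.of_le atTop
    set L : Set ForrestOmega → ℝ≥0∞ := fun C => (𝒰.map fun k => ν k C).lim with hLdef
    have hL : ∀ C, Tendsto (fun k => ν k C) 𝒰 (𝓝 (L C)) := by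
      intro C
      rw [Filter.Tendsto, ← Ultrafilter.coe_map]
      exact (𝒰.map fun k => ν k C).le_nhds_lim
    have hLuniv : L Set.univ = 1 :=
      tendsto_nhds_unique (hL Set.univ)
        (by simp only [hνuniv]; exact tendsto_const_nhds)
    have hLmono : ∀ C C' : Set ForrestOmega, C ⊆ C' → L C ≤ L C' := fun C C' h =>
      le_of_tendsto_of_tendsto' (hL C) (hL C') fun k => measure_mono h
    have hLle_one : ∀ C, L C ≤ 1 := fun C => (hLmono C Set.univ (Set.subset_univ C)).trans_eq hLuniv
    have hLne_top : ∀ C, L C ≠ ⊤ := fun C => ne_top_of_le_ne_top ENNReal.one_ne_top (hLle_one C)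
    -- the content
    set lam : Set ForrestOmega → ℝ≥0∞ :=
      fun K => ⨅ C : {C : Set ForrestOmega // IsClopen C ∧ K ⊆ C}, L C.1 with hlamdef
    have lam_le : ∀ (K C : Set ForrestOmega), IsClopen C → K ⊆ C → lam K ≤ L C :=
      fun K C h1 h2 => iInf_le (fun C : {C : Set ForrestOmega // IsClopen C ∧ K ⊆ C} => L C.1)
        ⟨C, h1, h2⟩
    have lam_clopen : ∀ C : Set ForrestOmega, IsClopen C → lam C = L C := fun C hC =>
      le_antisymm (lam_le _ _ hC subset_rfl) (le_iInf fun C' => hLmono _ _ C'.2.2)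
    have lam_mono : ∀ K K' : Set ForrestOmega, K ⊆ K' → lam K ≤ lam K' := fun K K' h =>
      le_iInf fun C => lam_le _ _ C.2.1 (h.trans C.2.2)
    have lam_ne_top : ∀ K, lam K ≠ ⊤ := fun K =>
      ne_top_of_le_ne_top (hLne_top Set.univ) (lam_le K Set.univ isClopen_univ (Set.subset_univ K))
    have lam_subadd : ∀ K1 K2 : Set ForrestOmega, lam (K1 ∪ K2) ≤ lam K1 + lam K2 := by
      intro K1 K2
      have h1 : lam K1 + lam K2 =
          ⨅ C1 : {C : Set ForrestOmega // IsClopen C ∧ K1 ⊆ C},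
            ⨅ C2 : {C : Set ForrestOmega // IsClopen C ∧ K2 ⊆ C}, (L C1.1 + L C2.1) := by
        rw [hlamdef]
        rw [ENNReal.iInf_add]
        exact iInf_congr fun C1 => ENNReal.add_iInf
      rw [h1]
      refine le_iInf fun C1 => le_iInf fun C2 => ?_
      refine (lam_le _ _ (C1.2.1.union C2.2.1) (Set.union_subset_union C1.2.2 C2.2.2)).trans ?_
      exact le_of_tendsto_of_tendsto' (hL _) ((hL C1.1).add (hL C2.1))
        fun k => measure_union_le _ _
    have lam_add : ∀ K1 K2 : Set ForrestOmega, IsCompact K1 → IsClosed K1 → IsClosed K2 →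
        Disjoint K1 K2 → lam (K1 ∪ K2) = lam K1 + lam K2 := by
      intro K1 K2 hK1c _ hK2cl hdis
      refine le_antisymm (lam_subadd K1 K2) ?_
      obtain ⟨V, hV, hK1V, hVK2⟩ := exists_clopen_sep hK1c hK2cl hdis
      refine le_iInf fun C => ?_
      have hsplit : L (C.1 ∩ V) + L (C.1 \ V) = L C.1 := by
        refine tendsto_nhds_unique (((hL _).add (hL _)).congr fun k => ?_) (hL C.1)
        exact measure_inter_add_diff C.1 hV.isOpen.measurableSet
      calc lam K1 + lam K2
          ≤ L (C.1 ∩ V) + L (C.1 \ V) := by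
            refine add_le_add ?_ ?_
            · exact lam_le _ _ (C.2.1.inter hV) (Set.subset_inter ((Set.subset_union_left).trans C.2.2) hK1V)
            · refine lam_le _ _ (C.2.1.diff hV) ?_
              rw [Set.subset_diff]
              exact ⟨(Set.subset_union_right).trans C.2.2, (hVK2.symm)⟩
        _ = L C.1 := hsplit
    -- bundle into a content
    set con : Content ForrestOmega :=
      { toFun := fun K => (lam K.1).toNNReal
        mono' := fun K1 K2 h => ENNReal.toNNReal_mono (lam_ne_top _) (lam_mono _ _ h)
        sup_disjoint' := by
          intro K1 K2 hd h1 h2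
          have hsup : (K1 ⊔ K2).carrier = K1.carrier ∪ K2.carrier := rfl
          rw [hsup, lam_add K1.carrier K2.carrier K1.2 h1 h2 hd,
            ENNReal.toNNReal_add (lam_ne_top _) (lam_ne_top _)]
        sup_le' := by
          intro K1 K2
          have hsup : (K1 ⊔ K2).carrier = K1.carrier ∪ K2.carrier := rfl
          rw [hsup, ← ENNReal.toNNReal_add (lam_ne_top _) (lam_ne_top _)]
          exact ENNReal.toNNReal_mono
            (ENNReal.add_ne_top.mpr ⟨lam_ne_top _, lam_ne_top _⟩)
            (lam_subadd _ _) } with hcondef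
    have hconK : ∀ K : Compacts ForrestOmega, (con K : ℝ≥0∞) = lam K.1 := fun K =>
      ENNReal.coe_toNNReal (lam_ne_top _)
    have hmc : ∀ C : Set ForrestOmega, IsClopen C → con.measure C = L C := by
      intro C hC
      rw [Content.measure_apply _ hC.isOpen.measurableSet]
      rw [show con.outerMeasure C = con.innerContent ⟨C, hC.isOpen⟩ from
        con.outerMeasure_opens ⟨C, hC.isOpen⟩]
      refine le_antisymm ?_ ?_
      · refine iSup_le fun K => iSup_le fun hK => ?_
        rw [hconK]
        exact (lam_mono _ _ hK).trans_eq (lam_clopen C hC)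
      · have := con.le_innerContent ⟨C, hC.isClosed.isCompact⟩ ⟨C, hC.isOpen⟩ subset_rfl
        refine le_trans ?_ this
        rw [hconK]
        exact (lam_clopen C hC).ge
    have hprob : IsProbabilityMeasure con.measure :=
      ⟨by rw [hmc Set.univ isClopen_univ]; exact hLuniv⟩
    have hgen : (inferInstance : MeasurableSpace ForrestOmega)
        = MeasurableSpace.generateFrom {C : Set ForrestOmega | IsClopen C} := by
      rw [BorelSpace.measurable_eq (α := ForrestOmega)]
      exact isTopologicalBasis_isClopen.borel_eq_generateFrom
    have hpi : IsPiSystem {C : Set ForrestOmega | IsClopen C} :=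
      fun s hs t ht _ => hs.inter ht
    have hinv : Measure.map forrestShift con.measure = con.measure := by
      have hmapprob : IsProbabilityMeasure (Measure.map forrestShift con.measure) :=
        Measure.isProbabilityMeasure_map forrestShift.measurable.aemeasurable
      refine ext_of_generate_finite _ hgen hpi (fun s hs => ?_) ?_
      · have hs' : IsClopen s := hs
        rw [Measure.map_apply forrestShift.measurable hs'.isOpen.measurableSet]
        rw [hmc _ (hs'.preimage continuous_forrestShift), hmc _ hs']
        exact tendsto_nhds_unique (hL _)
          ((hL s).congr fun k => (hνinv k s hs'.isOpen.measurableSet).symm)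
      · rw [hmapprob.measure_univ, hprob.measure_univ]
    -- the limit system
    set 𝒮 : MPSystem :=
      { X := ForrestOmega
        μ := con.measure
        prob := hprob
        T := forrestShift
        mp := ⟨forrestShift.measurable, hinv⟩ } with h𝒮def
    have hiter : ∀ (m : ℤ) (ω : ForrestOmega) (j : ℤ), 𝒮.iter m ω j = ω (j + m) := by
      intro m
      induction m using Int.induction_on with
      | zero => intro ω j; rw [𝒮.iter_zero_s5]; simp
      | succ k ih =>
          intro ω j
          rw [𝒮.iter_succ, ih]
          show ω (j + k + 1) = ω (j + (k + 1))
          congr 1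
          ring
      | pred k ih =>
          intro ω j
          rw [show (-(k : ℤ) - 1) = (-(k : ℤ)) - 1 from rfl, 𝒮.iter_pred, ih]
          show ω (j + -k - 1) = ω (j + (-k - 1))
          congr 1
          ring
    have himg : ∀ n : ℤ, A ∩ (𝒮.iter n '' A) = E n := by
      intro n
      rw [𝒮.image_iter]
      ext ω
      constructor
      · rintro ⟨h1, h2⟩
        refine ⟨h1, ?_⟩
        have := h2
        rw [Set.mem_preimage] at this
        have h3 : 𝒮.iter (-n) ω 0 = true := this
        rwa [hiter, zero_add] at h3
      · rintro ⟨h1, h2⟩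
        refine ⟨h1, ?_⟩
        rw [Set.mem_preimage]
        show 𝒮.iter (-n) ω 0 = true
        rwa [hiter, zero_add]
    have hμA : 0 < 𝒮.μ A := by
      have h1 : ENNReal.ofReal δ ≤ L A := by
        refine ge_of_tendsto' (hL A) fun k => ?_
        rw [hνA k]
        exact (hμD k).le
      have h2 : (0 : ℝ≥0∞) < ENNReal.ofReal δ := ENNReal.ofReal_pos.mpr hδ
      calc (0 : ℝ≥0∞) < ENNReal.ofReal δ := h2
        _ ≤ L A := h1
        _ = 𝒮.μ A := (hmc A hA_clopen).symm
    obtain ⟨n, hnS, hpos⟩ := hS 𝒮 A hA_clopen.isOpen.measurableSet hμA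
    rw [himg n] at hpos
    have hzero : 𝒮.μ (E n) = 0 := by
      have hev : ∀ᶠ k in (𝒰 : Filter ℕ), ν k (E n) = 0 := by
        refine h𝒰le ?_
        filter_upwards [eventually_ge_atTop n.natAbs] with k hk
        exact hνE n hnS k hk
      have ht0 : Tendsto (fun k => ν k (E n)) 𝒰 (𝓝 0) := by
        refine Tendsto.congr' ?_ tendsto_const_nhds
        filter_upwards [hev] with k hk
        exact hk.symm
      have : L (E n) = 0 := tendsto_nhds_unique (hL (E n)) ht0
      rw [show 𝒮.μ (E n) = con.measure (E n) from rfl, hmc _ (hE_clopen n), this]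
    rw [hzero] at hpos
    exact lt_irrefl _ hpos
  · -- easy direction
    intro h 𝒮 D hD hμD
    have hfin : 𝒮.μ D ≠ ⊤ := by
      have := 𝒮.prob
      exact (measure_lt_top _ _).ne
    set t : ℝ := (𝒮.μ D).toReal with htdef
    have ht : 0 < t := ENNReal.toReal_pos hμD.ne' hfin
    obtain ⟨F, hFfin, hFS, hFrec⟩ := h (t / 2) (by positivity)
    have hlt : ENNReal.ofReal (t / 2) < 𝒮.μ D := by
      rw [ENNReal.ofReal_lt_iff_lt_toReal (by positivity) hfin]
      linarith
    obtain ⟨n, hnF, hn⟩ := hFrec 𝒮 D hD hlt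
    exact ⟨n, hFS hnF, hn⟩
end

section
/- Let δ ≥ 0. If S ⊆ ℤ is a set of δ-recurrence, then for every δ' > δ there is a finite subset S' ⊆ S such that S' is a set of δ'-recurrence. -/
open MeasureTheory Filter

open MeasureTheory Filter Set Topology
open scoped ENNReal

namespace DRaux

/-! ### Iterates of a measure preserving system -/

lemma iter_zero (𝒮 : MPSystem) (x : 𝒮.X) : 𝒮.iter 0 x = x := by
  simp [MPSystem.iter]

lemma iter_add_one (𝒮 : MPSystem) (n : ℤ) (x : 𝒮.X) :
    𝒮.iter (n + 1) x = 𝒮.iter n (𝒮.T x) := by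
  simp only [MPSystem.iter, zpow_add_one, Equiv.Perm.mul_apply]
  rfl

lemma iter_sub_one (𝒮 : MPSystem) (n : ℤ) (x : 𝒮.X) :
    𝒮.iter (n - 1) x = 𝒮.iter n (𝒮.T.symm x) := by
  simp only [MPSystem.iter, zpow_sub_one, Equiv.Perm.mul_apply]
  rfl

lemma iter_iter (𝒮 : MPSystem) (m n : ℤ) (x : 𝒮.X) :
    𝒮.iter m (𝒮.iter n x) = 𝒮.iter (m + n) x := by
  simp only [MPSystem.iter, zpow_add, Equiv.Perm.mul_apply]

lemma measurable_iter (𝒮 : MPSystem) (n : ℤ) : Measurable (𝒮.iter n) := by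
  induction n using Int.induction_on with
  | zero => simpa [funext (iter_zero 𝒮)] using measurable_id'
  | succ n ih =>
      have : 𝒮.iter (n + 1) = fun x => 𝒮.iter n (𝒮.T x) := funext fun x => iter_add_one 𝒮 n x
      rw [this]
      exact ih.comp 𝒮.T.measurable
  | pred n ih =>
      have : 𝒮.iter (-n - 1) = fun x => 𝒮.iter (-n) (𝒮.T.symm x) :=
        funext fun x => iter_sub_one 𝒮 (-n) x
      rw [this]
      exact ih.comp 𝒮.T.symm.measurable

lemma iter_image (𝒮 : MPSystem) (n : ℤ) (D : Set 𝒮.X) :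
    𝒮.iter n '' D = 𝒮.iter (-n) ⁻¹' D := by
  have h : ((𝒮.T.toEquiv : Equiv.Perm 𝒮.X) ^ n) '' D
      = ((𝒮.T.toEquiv : Equiv.Perm 𝒮.X) ^ n).symm ⁻¹' D := Equiv.image_eq_preimage_symm _ D
  have h2 : ((𝒮.T.toEquiv : Equiv.Perm 𝒮.X) ^ n).symm
      = ((𝒮.T.toEquiv : Equiv.Perm 𝒮.X) ^ (-n) : Equiv.Perm 𝒮.X) := by
    rw [zpow_neg, ← Equiv.Perm.inv_def]
  show ((𝒮.T.toEquiv : Equiv.Perm 𝒮.X) ^ n) '' D = _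
  rw [h, h2]; rfl


/-! ### The symbolic space -/

abbrev Ω : Type := ℤ → Bool

def shiftE : Ω ≃ Ω where
  toFun ω := fun i => ω (i + 1)
  invFun ω := fun i => ω (i - 1)
  left_inv ω := funext fun i => by simp
  right_inv ω := funext fun i => by simp

def shiftM : Ω ≃ᵐ Ω where
  toEquiv := shiftE
  measurable_toFun := measurable_pi_lambda _ fun i => measurable_pi_apply _
  measurable_invFun := measurable_pi_lambda _ fun i => measurable_pi_apply _

def shiftH : Ω ≃ₜ Ω where
  toEquiv := shiftE
  continuous_toFun := continuous_pi fun i => continuous_apply _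
  continuous_invFun := continuous_pi fun i => continuous_apply _

lemma shiftE_zpow (n : ℤ) : ∀ (ω : Ω) (i : ℤ), (shiftE ^ n) ω i = ω (i + n) := by
  induction n using Int.induction_on with
  | zero => intro ω i; simp
  | succ n ih =>
      intro ω i
      have : shiftE ^ ((n : ℤ) + 1) = shiftE ^ (n : ℤ) * shiftE := zpow_add_one _ _
      rw [this, Equiv.Perm.mul_apply, ih]
      show ω (i + n + 1) = ω (i + (n + 1))
      ring_nf
  | pred n ih =>
      intro ω i
      have : shiftE ^ (-(n : ℤ) - 1) = shiftE ^ (-(n : ℤ)) * shiftE⁻¹ := zpow_sub_one _ _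
      rw [this, Equiv.Perm.mul_apply, ih]
      show ω (i + -n - 1) = ω (i + (-n - 1))
      ring_nf

/-- Cylinder sets. -/
def cyl (j : ℤ) : Set Ω := {ω | ω j = true}

lemma isClopen_cyl (j : ℤ) : IsClopen (cyl j) := by
  have : cyl j = (fun ω : Ω => ω j) ⁻¹' {true} := rfl
  rw [this]
  exact (isClopen_discrete _).preimage (continuous_apply _)

lemma measurableSet_cyl (j : ℤ) : MeasurableSet (cyl j) :=
  (isClopen_cyl j).isOpen.measurableSet

/-! ### The symbolic factor map -/

open scoped Classical in
noncomputable def orbitMap (𝒮 : MPSystem) (D : Set 𝒮.X) : 𝒮.X → Ω :=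
  fun x i => if 𝒮.iter i x ∈ D then true else false

lemma orbitMap_apply_iff (𝒮 : MPSystem) (D : Set 𝒮.X) (x : 𝒮.X) (i : ℤ) :
    orbitMap 𝒮 D x i = true ↔ 𝒮.iter i x ∈ D := by
  classical
  simp [orbitMap]

lemma measurable_orbitMap (𝒮 : MPSystem) (D : Set 𝒮.X) (hD : MeasurableSet D) :
    Measurable (orbitMap 𝒮 D) := by
  classical
  refine measurable_pi_lambda _ fun i => ?_
  have hDi : MeasurableSet (𝒮.iter i ⁻¹' D) := hD.preimage (DRaux.measurable_iter 𝒮 i)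
  refine measurable_to_countable' fun b => ?_
  cases b with
  | false =>
      have h : (fun x => orbitMap 𝒮 D x i) ⁻¹' {false} = (𝒮.iter i ⁻¹' D)ᶜ := by
        ext x; by_cases h : 𝒮.iter i x ∈ D <;> simp [orbitMap, h]
      rw [h]; exact hDi.compl
  | true =>
      have h : (fun x => orbitMap 𝒮 D x i) ⁻¹' {true} = 𝒮.iter i ⁻¹' D := by
        ext x; by_cases h : 𝒮.iter i x ∈ D <;> simp [orbitMap, h]
      rw [h]; exact hDi

lemma orbitMap_preimage_cyl (𝒮 : MPSystem) (D : Set 𝒮.X) (j : ℤ) :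
    orbitMap 𝒮 D ⁻¹' cyl j = 𝒮.iter j ⁻¹' D := by
  ext x
  simp [cyl, orbitMap_apply_iff]

lemma orbitMap_shift (𝒮 : MPSystem) (D : Set 𝒮.X) (x : 𝒮.X) :
    shiftE (orbitMap 𝒮 D x) = orbitMap 𝒮 D (𝒮.T x) := by
  funext i
  show orbitMap 𝒮 D x (i + 1) = orbitMap 𝒮 D (𝒮.T x) i
  classical
  simp only [orbitMap, DRaux.iter_add_one 𝒮 i x]
/-! ### Ultrafilter limit of probability measures on `Ω` -/

section Limit

variable (ν : ℕ → Measure Ω)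

noncomputable def UF : Ultrafilter ℕ := Ultrafilter.of atTop

lemma UF_le_atTop : (UF : Filter ℕ) ≤ atTop := Ultrafilter.of_le _

noncomputable def Lim (A : Set Ω) : ℝ≥0∞ := ((UF.map fun k => ν k A) : Ultrafilter ℝ≥0∞).lim

lemma tendsto_Lim (A : Set Ω) : Tendsto (fun k => ν k A) (UF : Filter ℕ) (𝓝 (Lim ν A)) := by
  have := (UF.map fun k => ν k A).le_nhds_lim
  rwa [Ultrafilter.coe_map] at this

lemma Lim_le_one (hprob : ∀ k, IsProbabilityMeasure (ν k)) (A : Set Ω) : Lim ν A ≤ 1 := by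
  refine le_of_tendsto (tendsto_Lim ν A) ?_
  filter_upwards with k
  have := hprob k
  exact prob_le_one (μ := ν k)

lemma Lim_ne_top (hprob : ∀ k, IsProbabilityMeasure (ν k)) (A : Set Ω) : Lim ν A ≠ ⊤ :=
  fun h => by simpa [h] using Lim_le_one ν hprob A

lemma Lim_mono {A B : Set Ω} (h : A ⊆ B) : Lim ν A ≤ Lim ν B :=
  le_of_tendsto_of_tendsto' (tendsto_Lim ν A) (tendsto_Lim ν B)
    fun k => measure_mono h

lemma Lim_union_le (A B : Set Ω) : Lim ν (A ∪ B) ≤ Lim ν A + Lim ν B :=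
  le_of_tendsto_of_tendsto' (tendsto_Lim ν (A ∪ B))
    ((tendsto_Lim ν A).add (tendsto_Lim ν B)) fun k => measure_union_le A B

lemma Lim_union {A B : Set Ω} (hd : Disjoint A B) (hB : MeasurableSet B) :
    Lim ν (A ∪ B) = Lim ν A + Lim ν B := by
  refine tendsto_nhds_unique (tendsto_Lim ν (A ∪ B)) ?_
  have h : ∀ k, ν k (A ∪ B) = ν k A + ν k B := fun k => measure_union hd hB
  simpa [funext h] using (tendsto_Lim ν A).add (tendsto_Lim ν B)

lemma Lim_univ (hprob : ∀ k, IsProbabilityMeasure (ν k)) : Lim ν univ = 1 := by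
  refine tendsto_nhds_unique (tendsto_Lim ν univ) ?_
  have h : ∀ k, ν k univ = 1 := fun k => by have := hprob k; exact measure_univ (μ := ν k)
  simpa [funext h] using tendsto_const_nhds

/-- The limit content on compact subsets of `Ω`. -/
noncomputable def limContent (hprob : ∀ k, IsProbabilityMeasure (ν k)) : Content Ω where
  toFun K := (Lim ν (K : Set Ω)).toNNReal
  mono' K₁ K₂ h := ENNReal.toNNReal_mono (Lim_ne_top ν hprob _) (Lim_mono ν h)
  sup_disjoint' K₁ K₂ hd _h₁ h₂ := by
    have h := Lim_union ν (A := (K₁ : Set Ω)) (B := (K₂ : Set Ω)) hd h₂.measurableSet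
    show (Lim ν (↑K₁ ∪ ↑K₂)).toNNReal = _
    rw [h, ENNReal.toNNReal_add (Lim_ne_top ν hprob _) (Lim_ne_top ν hprob _)]
  sup_le' K₁ K₂ := by
    show (Lim ν (↑K₁ ∪ ↑K₂)).toNNReal ≤ _
    have h := Lim_union_le ν (K₁ : Set Ω) K₂
    have := ENNReal.toNNReal_mono
      (ENNReal.add_ne_top.mpr ⟨Lim_ne_top ν hprob _, Lim_ne_top ν hprob _⟩) h
    rwa [ENNReal.toNNReal_add (Lim_ne_top ν hprob _) (Lim_ne_top ν hprob _)] at this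

end Limit
/-! ### The limit measure -/

section LimitMeasure

variable (ν : ℕ → Measure Ω) (hprob : ∀ k, IsProbabilityMeasure (ν k))

noncomputable def limMeasure : Measure Ω := (limContent ν hprob).measure

lemma limMeasure_clopen {A : Set Ω} (hA : IsClopen A) :
    limMeasure ν hprob A = Lim ν A := by
  have hcomp : IsCompact A := hA.isClosed.isCompact
  rw [limMeasure, Content.measure_apply _ hA.isOpen.measurableSet]
  have h1 := Content.outerMeasure_of_isOpen (μ := limContent ν hprob) A hA.isOpen
  have h2 := Content.innerContent_of_isCompact (μ := limContent ν hprob) hcomp hA.isOpen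
  rw [h1, h2]
  show ((Lim ν A).toNNReal : ℝ≥0∞) = Lim ν A
  exact ENNReal.coe_toNNReal (Lim_ne_top ν hprob A)

instance limMeasure_prob : IsProbabilityMeasure (limMeasure ν hprob) := by
  constructor
  rw [limMeasure_clopen ν hprob isClopen_univ, Lim_univ ν hprob]

lemma limMeasure_preserving
    (hinv : ∀ k (A : Set Ω), MeasurableSet A → ν k (shiftE ⁻¹' A) = ν k A) :
    MeasurePreserving shiftM (limMeasure ν hprob) (limMeasure ν hprob) := by
  have hK : ∀ K : TopologicalSpace.Compacts Ω,
      (limContent ν hprob) (K.map shiftH shiftH.continuous) = (limContent ν hprob) K := by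
    intro K
    have himg : ∀ k, ν k ((shiftH : Ω → Ω) '' K) = ν k K := by
      intro k
      have hmK : MeasurableSet ((shiftH : Ω → Ω) '' K) := by
        have : (shiftH : Ω → Ω) '' K = shiftE.symm ⁻¹' K := Equiv.image_eq_preimage_symm shiftE _
        rw [this]
        exact K.isCompact.isClosed.measurableSet.preimage shiftM.symm.measurable
      have h := hinv k _ hmK
      rw [show shiftE ⁻¹' ((shiftH : Ω → Ω) '' K) = (K : Set Ω) from
        Equiv.preimage_image shiftE _] at h
      exact h.symm
    have : Lim ν ((shiftH : Ω → Ω) '' K) = Lim ν K := by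
      refine tendsto_nhds_unique ?_ (tendsto_Lim ν (K : Set Ω))
      simpa [funext himg] using tendsto_Lim ν ((shiftH : Ω → Ω) '' K)
    show ((Lim ν ((shiftH : Ω → Ω) '' (K : Set Ω))).toNNReal : ℝ≥0∞)
      = ((Lim ν (K : Set Ω)).toNNReal : ℝ≥0∞)
    rw [this]
  have houter := Content.outerMeasure_preimage (limContent ν hprob) shiftH hK
  constructor
  · exact shiftM.measurable
  · refine Measure.ext fun s hs => ?_
    rw [Measure.map_apply shiftM.measurable hs]
    have h1 : MeasurableSet ((shiftM : Ω → Ω) ⁻¹' s) := hs.preimage shiftM.measurable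
    rw [limMeasure, Content.measure_apply _ h1, Content.measure_apply _ hs]
    exact houter s

end LimitMeasure
/-! ### The symbolic limit system -/

noncomputable def symbSystem (ν : ℕ → Measure Ω) (hprob : ∀ k, IsProbabilityMeasure (ν k))
    (hinv : ∀ k (A : Set Ω), MeasurableSet A → ν k (shiftE ⁻¹' A) = ν k A) : MPSystem where
  X := Ω
  μ := limMeasure ν hprob
  prob := limMeasure_prob ν hprob
  T := shiftM
  mp := limMeasure_preserving ν hprob hinv

lemma symbSystem_iter_image (ν : ℕ → Measure Ω) (hprob : ∀ k, IsProbabilityMeasure (ν k))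
    (hinv : ∀ k (A : Set Ω), MeasurableSet A → ν k (shiftE ⁻¹' A) = ν k A) (n : ℤ) :
    (symbSystem ν hprob hinv).iter n '' cyl 0 = cyl (-n) := by
  refine (DRaux.iter_image (symbSystem ν hprob hinv) n (cyl 0)).trans ?_
  ext ω
  show (shiftE ^ (-n)) ω 0 = true ↔ ω (-n) = true
  have h := shiftE_zpow (-n) ω 0
  rw [zero_add] at h
  exact iff_of_eq (congrArg (· = true) h)
end DRaux
/-- **Lemma.** If `δ ≥ 0` and `S ⊆ ℤ` is a set of `δ`-recurrence, then for every `δ' > δ`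
there is a finite subset `S' ⊆ S` which is a set of `δ'`-recurrence. -/
theorem deltaRecurrence_exists_finite_subset (δ : ℝ) (hδ : 0 ≤ δ) (S : Set ℤ)
    (hS : IsDeltaRecurrenceSet δ S) (δ' : ℝ) (hδ' : δ < δ') :
    ∃ S' : Set ℤ, S' ⊆ S ∧ S'.Finite ∧ IsDeltaRecurrenceSet δ' S' := by
  classical
  by_contra hcon
  push_neg at hcon
  -- For each `k`, get a counterexample system for the finite set `S ∩ [-k, k]`.
  have hex : ∀ k : ℕ, ∃ (𝒮 : MPSystem) (D : Set 𝒮.X), MeasurableSet D ∧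
      ENNReal.ofReal δ' < 𝒮.μ D ∧
      ∀ n ∈ S ∩ Set.Icc (-(k : ℤ)) (k : ℤ), 𝒮.μ (D ∩ 𝒮.iter n '' D) = 0 := by
    intro k
    have hfin : (S ∩ Set.Icc (-(k : ℤ)) (k : ℤ)).Finite :=
      (Set.finite_Icc _ _).inter_of_right _
    have h := hcon _ Set.inter_subset_left hfin
    rw [IsDeltaRecurrenceSet] at h
    push_neg at h
    obtain ⟨𝒮, D, hD, hμD, hno⟩ := h
    exact ⟨𝒮, D, hD, hμD, fun n hn =>
      le_antisymm (by simpa using hno n hn) zero_le⟩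
  choose 𝒮 D hD hμD hzero using hex
  -- Push each system to the symbolic space.
  set ν : ℕ → Measure DRaux.Ω :=
    fun k => Measure.map (DRaux.orbitMap (𝒮 k) (D k)) (𝒮 k).μ with hν
  have hφmeas : ∀ k, Measurable (DRaux.orbitMap (𝒮 k) (D k)) :=
    fun k => DRaux.measurable_orbitMap (𝒮 k) (D k) (hD k)
  have hprob : ∀ k, IsProbabilityMeasure (ν k) := by
    intro k
    have := (𝒮 k).prob
    exact Measure.isProbabilityMeasure_map (hφmeas k).aemeasurable
  have hcylpre : ∀ k (j : ℤ),
      DRaux.orbitMap (𝒮 k) (D k) ⁻¹' DRaux.cyl j = (𝒮 k).iter j ⁻¹' D k :=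
    fun k j => DRaux.orbitMap_preimage_cyl (𝒮 k) (D k) j
  have hinv : ∀ k (A : Set DRaux.Ω), MeasurableSet A →
      ν k (DRaux.shiftE ⁻¹' A) = ν k A := by
    intro k A hA
    have hpre : MeasurableSet (DRaux.shiftE ⁻¹' A) := hA.preimage DRaux.shiftM.measurable
    show (Measure.map (DRaux.orbitMap (𝒮 k) (D k)) (𝒮 k).μ) (DRaux.shiftE ⁻¹' A)
      = (Measure.map (DRaux.orbitMap (𝒮 k) (D k)) (𝒮 k).μ) A
    rw [Measure.map_apply (hφmeas k) hpre, Measure.map_apply (hφmeas k) hA]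
    have hcomm : DRaux.orbitMap (𝒮 k) (D k) ⁻¹' (DRaux.shiftE ⁻¹' A)
        = (𝒮 k).T ⁻¹' (DRaux.orbitMap (𝒮 k) (D k) ⁻¹' A) := by
      ext x
      show DRaux.shiftE (DRaux.orbitMap (𝒮 k) (D k) x) ∈ A ↔ _
      rw [DRaux.orbitMap_shift]
      rfl
    rw [hcomm]
    exact (𝒮 k).mp.measure_preimage
      ((hA.preimage (hφmeas k)).nullMeasurableSet)
  -- Evaluate `ν k` on the relevant clopen sets.
  have hiter0 : ∀ k, (𝒮 k).iter 0 ⁻¹' D k = D k := by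
    intro k
    ext x
    simp only [Set.mem_preimage, DRaux.iter_zero]
  have hcyl0 : ∀ k, ν k (DRaux.cyl 0) = (𝒮 k).μ (D k) := by
    intro k
    show (Measure.map (DRaux.orbitMap (𝒮 k) (D k)) (𝒮 k).μ) (DRaux.cyl 0) = _
    rw [Measure.map_apply (hφmeas k) (DRaux.measurableSet_cyl 0), hcylpre k 0, hiter0 k]
  have hcylint : ∀ k (n : ℤ), ν k (DRaux.cyl 0 ∩ DRaux.cyl (-n))
      = (𝒮 k).μ (D k ∩ (𝒮 k).iter n '' D k) := by
    intro k n
    show (Measure.map (DRaux.orbitMap (𝒮 k) (D k)) (𝒮 k).μ)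
      (DRaux.cyl 0 ∩ DRaux.cyl (-n)) = _
    rw [Measure.map_apply (hφmeas k)
      ((DRaux.measurableSet_cyl 0).inter (DRaux.measurableSet_cyl (-n)))]
    rw [Set.preimage_inter, hcylpre k 0, hcylpre k (-n), hiter0 k, ← DRaux.iter_image]
  -- The limit system.
  set sys : MPSystem := DRaux.symbSystem ν hprob hinv with hsys
  have hμC : ENNReal.ofReal δ < sys.μ (DRaux.cyl 0) := by
    have h1 : sys.μ (DRaux.cyl 0) = DRaux.Lim ν (DRaux.cyl 0) :=
      DRaux.limMeasure_clopen ν hprob (DRaux.isClopen_cyl 0)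
    have h2 : ENNReal.ofReal δ' ≤ DRaux.Lim ν (DRaux.cyl 0) := by
      refine ge_of_tendsto (DRaux.tendsto_Lim ν (DRaux.cyl 0)) ?_
      filter_upwards with k
      rw [hcyl0 k]
      exact (hμD k).le
    rw [h1]
    exact lt_of_lt_of_le ((ENNReal.ofReal_lt_ofReal_iff (lt_of_le_of_lt hδ hδ')).2 hδ') h2
  obtain ⟨n, hnS, hpos⟩ := hS sys (DRaux.cyl 0) (DRaux.measurableSet_cyl 0) hμC
  have himg : sys.iter n '' DRaux.cyl 0 = DRaux.cyl (-n) :=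
    DRaux.symbSystem_iter_image ν hprob hinv n
  have hclopen : IsClopen (DRaux.cyl 0 ∩ DRaux.cyl (-n)) :=
    (DRaux.isClopen_cyl 0).inter (DRaux.isClopen_cyl (-n))
  have hLzero : DRaux.Lim ν (DRaux.cyl 0 ∩ DRaux.cyl (-n)) = 0 := by
    refine tendsto_nhds_unique (DRaux.tendsto_Lim ν _) ?_
    have hev : ∀ᶠ k in Filter.atTop, ν k (DRaux.cyl 0 ∩ DRaux.cyl (-n)) = 0 := by
      filter_upwards [Filter.eventually_ge_atTop n.natAbs] with k hk
      rw [hcylint k n]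
      exact hzero k n ⟨hnS, by constructor <;> omega⟩
    have hev' : ∀ᶠ k in (DRaux.UF : Filter ℕ), ν k (DRaux.cyl 0 ∩ DRaux.cyl (-n)) = 0 :=
      hev.filter_mono DRaux.UF_le_atTop
    exact Filter.Tendsto.congr' (Filter.EventuallyEq.symm hev') tendsto_const_nhds
  have : sys.μ (DRaux.cyl 0 ∩ sys.iter n '' DRaux.cyl 0) = 0 := by
    rw [himg]
    exact (DRaux.limMeasure_clopen ν hprob hclopen).trans hLzero
  rw [this] at hpos
  exact lt_irrefl 0 hpos
end

section
/- Let δ > 0. If S ⊆ ℤ is measure expanding, E ⊆ ℤ is a set of δ-recurrence, and (X,μ,T) is a measure preserving system with a measurable set D ⊆ X having μ(D) > 0, then S ∩ (E + R₀(T;D)) is a set of δ-recurrence, where E + R₀(T;D) := {e + r : e ∈ E, r ∈ R₀(T;D)}. -/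
open MeasureTheory Filter

/-- The set of return times `R_c(T;D) = {n ∈ ℤ : μ(D ∩ TⁿD) > c}`. -/
def returnTimes (𝒮 : MPSystem) (D : Set 𝒮.X) (c : ℝ) : Set ℤ :=
  {n : ℤ | ENNReal.ofReal c < 𝒮.μ (D ∩ 𝒮.iter n '' D)}


/-- Product of two (possibly different) measure preserving systems. -/
noncomputable def MPSystem.prod2 (𝒮 𝒯 : MPSystem) : MPSystem where
  X := 𝒮.X × 𝒯.X
  μ := 𝒮.μ.prod 𝒯.μ
  prob := by have := 𝒮.prob; have := 𝒯.prob; infer_instance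
  T := 𝒮.T.prodCongr 𝒯.T
  mp := by have := 𝒮.prob; have := 𝒯.prob; exact 𝒮.mp.prod 𝒯.mp

lemma prodCongr_zpow {α β : Type*} (a : Equiv.Perm α) (b : Equiv.Perm β) (n : ℤ) :
    (Equiv.prodCongr a b) ^ n = Equiv.prodCongr (a ^ n) (b ^ n) := by
  have hpow : ∀ k : ℕ, (Equiv.prodCongr a b) ^ k = Equiv.prodCongr (a ^ k) (b ^ k) := by
    intro k
    induction k with
    | zero => rfl
    | succ k ih =>
      ext p <;>
      simp [pow_succ, Equiv.Perm.mul_apply, ih]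
  cases n with
  | ofNat k => simpa using hpow k
  | negSucc k =>
    rw [zpow_negSucc, zpow_negSucc, zpow_negSucc, hpow]
    ext p <;> rfl

lemma MPSystem.iter_prod2 (𝒮 𝒯 : MPSystem) (n : ℤ) (p : 𝒮.X × 𝒯.X) :
    (𝒮.prod2 𝒯).iter n p = (𝒮.iter n p.1, 𝒯.iter n p.2) := by
  show ((Equiv.prodCongr 𝒮.T.toEquiv 𝒯.T.toEquiv) ^ n) p = _
  rw [prodCongr_zpow]
  rfl

lemma MPSystem.iter_prod2_image (𝒮 𝒯 : MPSystem) (n : ℤ) (A : Set 𝒮.X) (B : Set 𝒯.X) :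
    (𝒮.prod2 𝒯).iter n '' (A ×ˢ B) = (𝒮.iter n '' A) ×ˢ (𝒯.iter n '' B) := by
  ext p
  constructor
  · rintro ⟨⟨a, b⟩, ⟨ha, hb⟩, rfl⟩
    rw [MPSystem.iter_prod2]
    exact ⟨⟨a, ha, rfl⟩, ⟨b, hb, rfl⟩⟩
  · rintro ⟨⟨a, ha, ha'⟩, ⟨b, hb, hb'⟩⟩
    exact ⟨(a, b), ⟨ha, hb⟩, by rw [MPSystem.iter_prod2]; simp [ha', hb']; rfl⟩

lemma MPSystem.measurable_iter (𝒮 : MPSystem) (n : ℤ) : Measurable (𝒮.iter n) := by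
  cases n with
  | ofNat k =>
    have : 𝒮.iter (Int.ofNat k) = (⇑𝒮.T)^[k] := by
      funext x
      show ((𝒮.T.toEquiv : Equiv.Perm 𝒮.X) ^ (Int.ofNat k)) x = _
      rw [Int.ofNat_eq_coe, zpow_natCast, Equiv.Perm.coe_pow]
      rfl
    rw [this]
    exact 𝒮.T.measurable.iterate k
  | negSucc k =>
    have : 𝒮.iter (Int.negSucc k) = (⇑𝒮.T.symm)^[k + 1] := by
      funext x
      show ((𝒮.T.toEquiv : Equiv.Perm 𝒮.X) ^ (Int.negSucc k)) x = _
      rw [zpow_negSucc, ← inv_pow, Equiv.Perm.coe_pow]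
      rfl
    rw [this]
    exact 𝒮.T.symm.measurable.iterate (k + 1)

lemma MPSystem.iter_iter (𝒮 : MPSystem) (m n : ℤ) (x : 𝒮.X) :
    𝒮.iter m (𝒮.iter n x) = 𝒮.iter (m + n) x := by
  show ((𝒮.T.toEquiv : Equiv.Perm 𝒮.X) ^ m) (((𝒮.T.toEquiv : Equiv.Perm 𝒮.X) ^ n) x) = _
  rw [← Equiv.Perm.mul_apply, ← zpow_add]
  rfl

lemma MPSystem.iter_image_eq_preimage (𝒮 : MPSystem) (n : ℤ) (A : Set 𝒮.X) :
    𝒮.iter n '' A = 𝒮.iter (-n) ⁻¹' A := by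
  ext x
  constructor
  · rintro ⟨a, ha, rfl⟩
    show 𝒮.iter (-n) (𝒮.iter n a) ∈ A
    rw [MPSystem.iter_iter]
    rw [neg_add_cancel]; exact ha
  · intro hx
    exact ⟨𝒮.iter (-n) x, hx, by rw [MPSystem.iter_iter]; simp only [add_neg_cancel]; rfl⟩

lemma MPSystem.measurableSet_iter_image (𝒮 : MPSystem) (n : ℤ) {A : Set 𝒮.X}
    (hA : MeasurableSet A) : MeasurableSet (𝒮.iter n '' A) := by
  rw [MPSystem.iter_image_eq_preimage]
  exact (𝒮.measurable_iter (-n)) hA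

/-- **Lemma (Aura).** If `δ > 0`, `S` is measure expanding, `E` is a set of `δ`-recurrence,
and `(X,μ,T)` is a measure preserving system with `μ(D) > 0`, then `S ∩ (E + R₀(T;D))`
is a set of `δ`-recurrence. -/
theorem measureExpanding_inter_sumset_returnTimes_deltaRecurrence
    (δ : ℝ) (hδ : 0 < δ) (S E : Set ℤ) (hS : MeasureExpanding S)
    (hE : IsDeltaRecurrenceSet δ E) (𝒮 : MPSystem) (D : Set 𝒮.X)
    (hD : MeasurableSet D) (hD0 : 0 < 𝒮.μ D) :
    IsDeltaRecurrenceSet δ (S ∩ Set.image2 (fun x y => x + y) E (returnTimes 𝒮 D 0)) := by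
  intro 𝒯 A hA hAδ
  -- get e ∈ E with μ'(A ∩ Tᵉ A) > 0
  obtain ⟨e, heE, he⟩ := hE 𝒯 A hA hAδ
  set A' : Set 𝒯.X := A ∩ 𝒯.iter e '' A with hA'def
  have hA'meas : MeasurableSet A' := hA.inter (𝒯.measurableSet_iter_image e hA)
  -- product system
  set P := 𝒮.prod2 𝒯 with hP
  have hBmeas : MeasurableSet (D ×ˢ A' : Set (𝒮.X × 𝒯.X)) := hD.prod hA'meas
  have := 𝒯.prob
  have := 𝒮.prob
  have hBpos : 0 < P.μ (D ×ˢ A') := by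
    show 0 < (𝒮.μ.prod 𝒯.μ) (D ×ˢ A')
    rw [MeasureTheory.Measure.prod_prod]
    exact ENNReal.mul_pos hD0.ne' he.ne'
  obtain ⟨m, hmS, hm⟩ := hS (-e) P (D ×ˢ A') hBmeas hBpos
  obtain ⟨s, hsS, rfl⟩ := hmS
  -- m = s + (-e)
  have hsplit : P.μ ((D ×ˢ A') ∩ P.iter (s + -e) '' (D ×ˢ A'))
      = 𝒮.μ (D ∩ 𝒮.iter (s + -e) '' D) * 𝒯.μ (A' ∩ 𝒯.iter (s + -e) '' A') := by
    show (𝒮.μ.prod 𝒯.μ) _ = _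
    rw [MPSystem.iter_prod2_image]
    show (𝒮.μ.prod 𝒯.μ) ((D ×ˢ A' : Set (𝒮.X × 𝒯.X)) ∩ ((𝒮.iter (s + -e) '' D) ×ˢ (𝒯.iter (s + -e) '' A'))) = _
    rw [Set.prod_inter_prod, MeasureTheory.Measure.prod_prod]
  rw [hsplit] at hm
  have hD' : 0 < 𝒮.μ (D ∩ 𝒮.iter (s + -e) '' D) := by
    rcases (pos_iff_ne_zero.mp hm) with h
    by_contra hc
    push_neg at hc
    simp only [nonpos_iff_eq_zero] at hc
    rw [hc, zero_mul] at hm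
    exact lt_irrefl _ hm
  have hA'' : 0 < 𝒯.μ (A' ∩ 𝒯.iter (s + -e) '' A') := by
    by_contra hc
    push_neg at hc
    simp only [nonpos_iff_eq_zero] at hc
    rw [hc, mul_zero] at hm
    exact lt_irrefl _ hm
  refine ⟨s, ⟨hsS, ⟨e, heE, s + -e, ?_, by ring⟩⟩, ?_⟩
  · -- s + -e ∈ returnTimes 𝒮 D 0
    show ENNReal.ofReal 0 < 𝒮.μ (D ∩ 𝒮.iter (s + -e) '' D)
    simpa using hD'
  · -- 0 < μ'(A ∩ Tˢ A)
    have hsub : A' ∩ 𝒯.iter (s + -e) '' A' ⊆ A ∩ 𝒯.iter s '' A := by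
      rintro x ⟨⟨hxA, -⟩, y, ⟨-, a, haA, rfl⟩, rfl⟩
      refine ⟨hxA, a, haA, ?_⟩
      rw [MPSystem.iter_iter]
      congr 1
      ring
    exact lt_of_lt_of_le hA'' (MeasureTheory.measure_mono hsub)
end

section
/- If A ⊆ ℤ, then for every finite set F ⊆ ℤ there exists t ∈ ℤ such that |(A + t) ∩ F| ≥ d*(A)·|F|, where d*(A) is the upper Banach density of A. -/
open MeasureTheory Filter

private lemma ubd_tendsto_aux (m c d : ℝ) (hc : 0 < c) :
    Tendsto (fun k : ℕ => m * (d + k) / (k * c)) atTop (nhds (m / c)) := by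
  have heq : ∀ᶠ k : ℕ in atTop, (m / c) * (d / k + 1) = m * (d + k) / (k * c) := by
    filter_upwards [eventually_ge_atTop 1] with k hk
    have hk0 : (0:ℝ) < k := by exact_mod_cast hk
    have hk0' : (k:ℝ) ≠ 0 := ne_of_gt hk0
    have hc0 : c ≠ 0 := ne_of_gt hc
    field_simp
  apply Tendsto.congr' heq
  have h1 : Tendsto (fun k : ℕ => d / k + 1) atTop (nhds (0 + 1)) :=
    (tendsto_const_div_atTop_nhds_zero_nat _).add tendsto_const_nhds
  have := h1.const_mul (m / c)
  simpa using this

/-- **Lemma.** For any `A ⊆ ℤ` and any finite `F ⊆ ℤ`, there is `t ∈ ℤ` with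
`|(A + t) ∩ F| ≥ d*(A)·|F|`. -/
theorem exists_translate_dense_in_finite (A : Set ℤ) (F : Set ℤ) (hF : F.Finite) :
    ∃ t : ℤ, upperBanachDensity A * F.ncard ≤ ((((fun a => a + t) '' A) ∩ F).ncard : ℝ) := by
  classical
  by_contra hcon
  push_neg at hcon
  set δ := upperBanachDensity A with hδ
  set Ff := hF.toFinset with hFf
  have hFcard : (F.ncard : ℝ) = (Ff.card : ℝ) := by
    rw [Set.ncard_eq_toFinset_card F hF]
  set c : ℤ → ℕ := fun t => (((fun a => a + t) '' A) ∩ F).ncard with hc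
  have hcon' : ∀ t, (c t : ℝ) < δ * Ff.card := by
    intro t; have := hcon t; rwa [hFcard] at this
  have hFpos : 0 < (Ff.card : ℝ) := by
    rcases Nat.eq_zero_or_pos Ff.card with h | h
    · exfalso
      have h2 := hcon' 0
      rw [h] at h2
      push_cast at h2
      rw [mul_zero] at h2
      exact absurd h2 (not_lt.mpr (Nat.cast_nonneg _))
    · exact_mod_cast h
  have hBpos : 0 < δ * Ff.card :=
    lt_of_le_of_lt (Nat.cast_nonneg (c 0)) (hcon' 0)
  have hδpos : 0 < δ := by nlinarith [hBpos, hFpos]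
  set M : ℤ := ⌈δ * Ff.card⌉ - 1 with hM
  have hMlt : (M : ℝ) < δ * Ff.card := by
    have := Int.ceil_lt_add_one (δ * (Ff.card : ℝ))
    push_cast [hM]; linarith
  have hM0 : 0 ≤ M := by
    have : (1 : ℤ) ≤ ⌈δ * Ff.card⌉ := by
      rw [Int.le_ceil_iff]; push_cast; linarith
    omega
  have hcM : ∀ t, c t ≤ M.toNat := by
    intro t
    have h1 : (c t : ℝ) < ⌈δ * Ff.card⌉ := lt_of_lt_of_le (hcon' t) (Int.le_ceil _)
    have h2 : (c t : ℤ) < ⌈δ * Ff.card⌉ := by exact_mod_cast h1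
    omega
  have hFne : Ff.Nonempty := Finset.card_pos.mp (by exact_mod_cast hFpos)
  set fmin := Ff.min' hFne with hfmin
  set fmax := Ff.max' hFne with hfmax
  set D : ℤ := fmax - fmin with hD
  have hD0 : 0 ≤ D := by
    have := Ff.min'_le _ (Ff.max'_mem hFne)
    omega
  -- key counting bound
  have key : ∀ (n : ℤ) (k : ℕ),
      ((A ∩ Set.Icc (n + 1) (n + k)).ncard : ℝ) * Ff.card ≤ (M : ℝ) * ((D : ℝ) + k) := by
    intro n k
    have hfin : (A ∩ Set.Icc (n + 1) (n + (k : ℤ))).Finite :=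
      (Set.finite_Icc _ _).inter_of_right A
    set AJ := hfin.toFinset with hAJ
    have hncard : (A ∩ Set.Icc (n + 1) (n + (k : ℤ))).ncard = AJ.card :=
      Set.ncard_eq_toFinset_card _ hfin
    set T' := Finset.Icc (fmin - (n + k)) (fmax - (n + 1)) with hT'
    have hfiber : (AJ ×ˢ Ff).card = ∑ t ∈ T', ((AJ ×ˢ Ff).filter fun p => p.2 - p.1 = t).card := by
      apply Finset.card_eq_sum_card_fiberwise
      rintro ⟨a, f⟩ hp
      rw [Finset.mem_coe, Finset.mem_product] at hp
      obtain ⟨ha, hf⟩ := hp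
      rw [hAJ, Set.Finite.mem_toFinset] at ha
      have ha' := ha.2
      rw [Set.mem_Icc] at ha'
      have hf1 : fmin ≤ f := Ff.min'_le f hf
      have hf2 : f ≤ fmax := Ff.le_max' f hf
      rw [hT', Finset.mem_coe, Finset.mem_Icc]
      beta_reduce
      omega
    have hfibBound : ∀ t ∈ T', ((AJ ×ˢ Ff).filter fun p => p.2 - p.1 = t).card ≤ M.toNat := by
      intro t _
      refine le_trans ?_ (hcM t)
      have hsub : (((fun a => a + t) '' A) ∩ F) = ↑(Ff.filter fun f => f - t ∈ A) := by
        ext x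
        simp only [Finset.coe_filter, Set.mem_setOf_eq, Set.mem_inter_iff, Set.mem_image,
          hFf, Set.Finite.mem_toFinset]
        constructor
        · rintro ⟨⟨a, haA, rfl⟩, hxF⟩
          exact ⟨hxF, by simpa using haA⟩
        · rintro ⟨hxF, hxA⟩
          exact ⟨⟨x - t, hxA, by ring⟩, hxF⟩
      have hceq : c t = (Ff.filter fun f => f - t ∈ A).card := by
        rw [hc]; simp only [hsub, Set.ncard_coe_finset]
      rw [hceq]
      apply Finset.card_le_card_of_injOn (fun p => p.2)
      · rintro ⟨a, f⟩ hp
        rw [Finset.mem_coe, Finset.mem_filter, Finset.mem_product] at hp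
        obtain ⟨⟨ha, hf⟩, ht⟩ := hp
        rw [Finset.mem_coe, Finset.mem_filter]
        refine ⟨hf, ?_⟩
        have heq : f - t = a := by omega
        rw [heq]
        rw [hAJ, Set.Finite.mem_toFinset] at ha
        exact ha.1
      · rintro ⟨a, f⟩ hp ⟨a', f'⟩ hp' (h : f = f')
        simp only [Finset.coe_filter, Set.mem_setOf_eq] at hp hp'
        have : a = a' := by omega
        simp [this, h]
    have hTcard : T'.card = (D + k).toNat := by
      rw [hT', Int.card_Icc]
      congr 1
      omega
    have hnat : AJ.card * Ff.card ≤ (D + k).toNat * M.toNat := by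
      calc AJ.card * Ff.card = (AJ ×ˢ Ff).card := (Finset.card_product _ _).symm
        _ = ∑ t ∈ T', ((AJ ×ˢ Ff).filter fun p => p.2 - p.1 = t).card := hfiber
        _ ≤ ∑ _t ∈ T', M.toNat := Finset.sum_le_sum hfibBound
        _ = T'.card * M.toNat := by rw [Finset.sum_const, smul_eq_mul]
        _ = (D + k).toNat * M.toNat := by rw [hTcard]
    have e1 : (((D + (k:ℤ)).toNat : ℤ) : ℝ) = (D:ℝ) + (k:ℝ) := by
      rw [Int.toNat_of_nonneg (by omega : (0:ℤ) ≤ D + k)]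
      push_cast; ring
    have e2 : ((M.toNat : ℤ) : ℝ) = (M:ℝ) := by rw [Int.toNat_of_nonneg hM0]
    rw [hncard]
    have hR : ((AJ.card : ℝ)) * Ff.card ≤ (((D + (k:ℤ)).toNat : ℝ)) * (M.toNat : ℝ) := by
      exact_mod_cast hnat
    push_cast at e1 e2
    calc ((AJ.card : ℝ)) * Ff.card ≤ (((D + (k:ℤ)).toNat : ℝ)) * (M.toNat : ℝ) := hR
      _ = (M : ℝ) * ((D : ℝ) + k) := by rw [e1, e2]; ring
  -- bound on the sup
  have hfg : ∀ k : ℕ, 1 ≤ k →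
      (⨆ n : ℤ, ((A ∩ Set.Icc (n + 1) (n + k)).ncard : ℝ) / k) ≤
        (M : ℝ) * ((D : ℝ) + k) / ((k : ℝ) * Ff.card) := by
    intro k hk
    have hkpos : (0 : ℝ) < k := by exact_mod_cast hk
    apply ciSup_le
    intro n
    rw [div_le_div_iff₀ hkpos (by positivity)]
    calc ((A ∩ Set.Icc (n + 1) (n + (k:ℤ))).ncard : ℝ) * ((k:ℝ) * Ff.card)
        = (((A ∩ Set.Icc (n + 1) (n + (k:ℤ))).ncard : ℝ) * Ff.card) * k := by ring
      _ ≤ ((M : ℝ) * ((D : ℝ) + k)) * k :=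
          mul_le_mul_of_nonneg_right (key n k) (le_of_lt hkpos)
  have hgtend : Tendsto (fun k : ℕ => (M : ℝ) * ((D : ℝ) + k) / ((k : ℝ) * Ff.card)) atTop
      (nhds ((M : ℝ) / Ff.card)) := ubd_tendsto_aux _ _ _ hFpos
  have hle : δ ≤ (M : ℝ) / Ff.card := by
    have h1 : Filter.limsup
        (fun k : ℕ => ⨆ n : ℤ, ((A ∩ Set.Icc (n + 1) (n + k)).ncard : ℝ) / k) Filter.atTop
        ≤ Filter.limsup (fun k : ℕ => (M : ℝ) * ((D : ℝ) + k) / ((k : ℝ) * Ff.card))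
            Filter.atTop := by
      apply Filter.limsup_le_limsup
      · filter_upwards [eventually_ge_atTop 1] with k hk
        exact hfg k hk
      · exact Filter.isCoboundedUnder_le_of_le atTop (x := 0)
          (fun k => Real.iSup_nonneg fun n => by positivity)
      · exact hgtend.isBoundedUnder_le
    rw [hgtend.limsup_eq] at h1
    exact h1
  have hlt : (M : ℝ) / Ff.card < δ := by
    rw [div_lt_iff₀ hFpos]
    exact hMlt
  linarith
end
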